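/- arXiv:1506.00192 — 6 statements merged into one kernel-verified Lean document; each statement's English description precedes it below -/
import Mathlib

section
/- Let (G, f) be a wall, i.e., a proper coloring f : V → {1, 2, …} of a finite graph G satisfying the support condition f(N[v]) ⊇ {1, …, f(v)} for all v. If v_1, …, v_n is an enumeration of V with f(v_i) ≤ f(v_j) whenever i < j, then the first-fit algorithm applied to this enumeration assigns exactly the color f(v_k) to v_k for every k. -/
/-- First-fit color of the `k`-th presented vertex: the least positive integer
not already used on an earlier neighbor. -/
noncomputable def firstFitColor {V : Type} (G : SimpleGraph V) (v : ℕ → V) : ℕ → ℕ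
  | k => sInf {c : ℕ | 0 < c ∧ ∀ j, ∀ _ : j < k, G.Adj (v j) (v k) → firstFitColor G v j ≠ c}
  termination_by k => k
  decreasing_by assumption

/-- If `(G, f)` is a wall (a proper coloring by positive integers satisfying
the support condition `f(N[v]) ⊇ {1, …, f(v)}`) and the vertices are
enumerated in nondecreasing order of color, then first-fit assigns exactly the
color `f(v_k)` to `v_k` for every `k`. -/
theorem firstFit_on_wall {n : ℕ} (G : SimpleGraph (Fin n)) (f : Fin n → ℕ)
    (hpos : ∀ v, 1 ≤ f v)
    (hproper : ∀ u v, G.Adj u v → f u ≠ f v)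
    (hsupport : ∀ v c, 1 ≤ c → c ≤ f v → ∃ u, (u = v ∨ G.Adj u v) ∧ f u = c)
    (v : ℕ → Fin n)
    (henum : Function.Bijective (fun k : Fin n => v (k : ℕ)))
    (hmono : ∀ i j, i < j → j < n → f (v i) ≤ f (v j)) :
    ∀ k, k < n → firstFitColor G v k = f (v k) := by
  intro k
  induction k using Nat.strong_induction_on with
  | _ k IH =>
  intro hk
  rw [firstFitColor]
  have hmem : f (v k) ∈ {c : ℕ | 0 < c ∧ ∀ j, ∀ _ : j < k,
      G.Adj (v j) (v k) → firstFitColor G v j ≠ c} := by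
    refine ⟨hpos _, fun j hj hadj => ?_⟩
    rw [IH j hj (hj.trans hk)]
    exact hproper _ _ hadj
  have hnot : ∀ c ∈ {c : ℕ | 0 < c ∧ ∀ j, ∀ _ : j < k,
      G.Adj (v j) (v k) → firstFitColor G v j ≠ c}, ¬ c < f (v k) := by
    rintro c ⟨hc, hcS⟩ hlt
    obtain ⟨u, hu, hfu⟩ := hsupport (v k) c hc hlt.le
    have hadj : G.Adj u (v k) := by
      rcases hu with rfl | h
      · omega
      · exact h
    obtain ⟨j, hj⟩ := henum.2 u
    simp only at hj
    have hjk : (j : ℕ) < k := by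
      rcases lt_trichotomy (j : ℕ) k with h | h | h
      · exact h
      · exfalso
        rw [← h, hj] at hadj
        exact G.irrefl hadj
      · have := hmono k j h j.isLt
        rw [hj] at this
        omega
    exact hcS j hjk (hj ▸ hadj) (by rw [IH j hjk (hjk.trans hk), hj, hfu])
  have h1 := Nat.sInf_le hmem
  have h2 := Nat.sInf_mem (Set.nonempty_of_mem hmem)
  have h3 := hnot _ h2
  omega
end

section
/- Let r ≥ 1. If an r-cap exists, then there is a constant b such that for every natural number k there exists a wall (G, f) whose graph has clique number exactly k and which uses at least r·k − b colors, i.e., |f(V)| ≥ r·k − b. In particular, r ≤ sup over nonempty interval graphs G of χ_FF(G)/ω(G). -/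
/-- The interval graph determined by an interval representation `I`. -/
def intervalGraph {n : ℕ} (I : Fin n → Set ℝ) : SimpleGraph (Fin n) where
  Adj u v := u ≠ v ∧ (I u ∩ I v).Nonempty
  symm := by
    constructor
    intro u v h
    exact ⟨h.1.symm, by rw [Set.inter_comm]; exact h.2⟩
  loopless := by constructor; intro v h; exact h.1 rfl

/-- `I` is an interval representation: every vertex is assigned a nonempty
interval (convex subset) of `ℝ`. -/
def IsIntervalRep {n : ℕ} (I : Fin n → Set ℝ) : Prop :=
  ∀ v, (I v).Nonempty ∧ Convex ℝ (I v)

/-- `χ_FF(G)`: the maximum over all enumerations of the vertices of the number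
of distinct colors used by first-fit. -/
noncomputable def chiFF {n : ℕ} (G : SimpleGraph (Fin n)) : ℕ :=
  sSup {m : ℕ | ∃ v : ℕ → Fin n, Function.Bijective (fun k : Fin n => v (k : ℕ)) ∧
    m = ((Finset.range n).image (firstFitColor G v)).card}

/-- `(G, f)` is a wall: `f` is a proper coloring by positive integers such
that `f(N[v]) ⊇ {1, …, f(v)}` for all `v` (the support condition). -/
def IsWall {n : ℕ} (G : SimpleGraph (Fin n)) (f : Fin n → ℕ) : Prop :=
  (∀ v, 1 ≤ f v) ∧
  (∀ u v, G.Adj u v → f u ≠ f v) ∧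
  (∀ v c, 1 ≤ c → c ≤ f v → ∃ u, (u = v ∨ G.Adj u v) ∧ f u = c)

/-- An `r`-cap: a nonempty interval graph with representation `I`, a proper
coloring `f` by nonpositive integers attaining `0`, an interval `J v ⊆ I v` of
positive length for each vertex (distinct `J`'s being disjoint), and cone
depths `c v ≤ -1`, satisfying the emptiness, sparseness and support
conditions, where `C_v = f(\{u : I_u ∩ J_v ≠ ∅\})`. -/
def IsCap {n : ℕ} (r : ℝ) (I : Fin n → Set ℝ) (f : Fin n → ℤ)
    (J : Fin n → Set ℝ) (c : Fin n → ℤ) : Prop :=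
  0 < n ∧
  IsIntervalRep I ∧
  (∀ v, f v ≤ 0) ∧
  (∀ u v, (intervalGraph I).Adj u v → f u ≠ f v) ∧
  (∃ v, f v = 0) ∧
  (∀ v, J v ⊆ I v ∧ Convex ℝ (J v) ∧ ∃ a b : ℝ, a < b ∧ a ∈ J v ∧ b ∈ J v) ∧
  (∀ u v, (J u ∩ J v).Nonempty → J u = J v) ∧
  (∀ v, c v ≤ -1) ∧
  -- emptiness: C_v ∩ (-∞, c_v] = ∅
  (∀ v u, (I u ∩ J v).Nonempty → c v < f u) ∧
  -- sparseness: |C_v ∩ (c_v, 0]| ≤ -c_v / r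
  (∀ v, (((f '' {u | (I u ∩ J v).Nonempty}) ∩ Set.Ioc (c v) 0).ncard : ℝ)
      ≤ -(c v : ℝ) / r) ∧
  -- support: every integer in (c_v, f v] is a color of N[v]
  (∀ v m, c v < m → m ≤ f v → ∃ u, (u = v ∨ (intervalGraph I).Adj u v) ∧ f u = m)




open Set

namespace CapWall

/-- 1-dimensional Helly property. -/
lemma helly {V : Type*} (s : Finset V) (hs : s.Nonempty) (I : V → Set ℝ)
    (hconv : ∀ v, Convex ℝ (I v))
    (hpair : ∀ u ∈ s, ∀ v ∈ s, (I u ∩ I v).Nonempty) :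
    ∃ x : ℝ, ∀ v ∈ s, x ∈ I v := by
  classical
  have hq : ∀ u ∈ s, ∀ v ∈ s, ∃ x, x ∈ I u ∩ I v := hpair
  set q : V → V → ℝ := fun u v =>
    if h : (I u ∩ I v).Nonempty then h.choose else 0 with hqdef
  have hqmem : ∀ u ∈ s, ∀ v ∈ s, q u v ∈ I u ∩ I v := by
    intro u hu v hv
    have h := hpair u hu v hv
    simp only [hqdef, dif_pos h]
    exact h.choose_spec
  set Q : V → ℝ := fun u => s.sup' hs (q u) with hQdef
  have hQmem : ∀ u ∈ s, Q u ∈ I u := by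
    intro u hu
    obtain ⟨v, hv, hQe⟩ := Finset.exists_mem_eq_sup' hs (q u)
    show s.sup' hs (q u) ∈ I u
    rw [hQe]
    exact (hqmem u hu v hv).1
  obtain ⟨u₀, hu₀, hx⟩ := Finset.exists_mem_eq_inf' hs Q
  refine ⟨s.inf' hs Q, ?_⟩
  intro w hw
  have h1 : q u₀ w ∈ I w := (hqmem u₀ hu₀ w hw).2
  have h2 : Q w ∈ I w := hQmem w hw
  have hle1 : q u₀ w ≤ s.inf' hs Q := by
    rw [hx]; exact Finset.le_sup' (q u₀) hw
  have hle2 : s.inf' hs Q ≤ Q w := Finset.inf'_le Q hw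
  exact (hconv w).ordConnected.out h1 h2 ⟨hle1, hle2⟩

/-- Image of a convex subset of ℝ under an (increasing) affine map is convex. -/
lemma convex_affine_image {p d : ℝ} {S : Set ℝ} (hS : Convex ℝ S) :
    Convex ℝ ((fun x => p * x + d) '' S) := by
  rintro _ ⟨x, hx, rfl⟩ _ ⟨y, hy, rfl⟩ a b ha hb hab
  refine ⟨a * x + b * y, hS hx hy ha hb hab, ?_⟩
  simp only [smul_eq_mul]
  have : a * d + b * d = d := by rw [← add_mul, hab, one_mul]
  ring_nf
  nlinarith [this]


/-- A bounded, normalized cap. -/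
structure GoodCap (r : ℝ) where
  n : ℕ
  R : ℝ
  hR : 0 < R
  I : Fin n → Set ℝ
  f : Fin n → ℤ
  J : Fin n → Set ℝ
  c : Fin n → ℤ
  a : Fin n → ℝ
  b : Fin n → ℝ
  npos : 0 < n
  Inonempty : ∀ v, (I v).Nonempty
  Iconv : ∀ v, Convex ℝ (I v)
  Isub : ∀ v, I v ⊆ Set.Icc (-R) R
  fle : ∀ v, f v ≤ 0
  proper : ∀ u v, u ≠ v → (I u ∩ I v).Nonempty → f u ≠ f v
  top : ∃ v, f v = 0
  Jsub : ∀ v, J v ⊆ I v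
  Jconv : ∀ v, Convex ℝ (J v)
  ab_mem : ∀ v, a v ∈ J v ∧ b v ∈ J v ∧ a v < b v
  ab_eq : ∀ u v, J u = J v → a u = a v ∧ b u = b v
  Jdisj : ∀ u v, (J u ∩ J v).Nonempty → J u = J v
  cneg : ∀ v, c v ≤ -1
  empt : ∀ v u, (I u ∩ J v).Nonempty → c v < f u
  sparse : ∀ v, (((f '' {u | (I u ∩ J v).Nonempty}) ∩ Set.Ioc (c v) 0).ncard : ℝ)
      ≤ -(c v : ℝ) / r
  support : ∀ v m, c v < m → m ≤ f v →
      ∃ u, (u = v ∨ (u ≠ v ∧ (I u ∩ I v).Nonempty)) ∧ f u = m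

/-- Extract a bounded cap from a cap. -/
lemma goodCap_of_isCap (r : ℝ) {n : ℕ} (I : Fin n → Set ℝ) (f : Fin n → ℤ)
    (J : Fin n → Set ℝ) (c : Fin n → ℤ) (hcap : IsCap r I f J c) :
    Nonempty (GoodCap r) := by
  classical
  obtain ⟨hn, hrep, hfle, hprop, htop, hJ, hJdisj, hcneg, hempt, hsparse, hsupp⟩ := hcap
  -- canonical two points in a set
  set A : Set ℝ → ℝ := fun S =>
    if h : ∃ p q : ℝ, p < q ∧ p ∈ S ∧ q ∈ S then h.choose else 0 with hA
  set Bf : Set ℝ → ℝ := fun S =>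
    if h : ∃ p q : ℝ, p < q ∧ p ∈ S ∧ q ∈ S then h.choose_spec.choose else 0 with hB
  have hABmem : ∀ S : Set ℝ, (∃ p q : ℝ, p < q ∧ p ∈ S ∧ q ∈ S) →
      A S < Bf S ∧ A S ∈ S ∧ Bf S ∈ S := by
    intro S h
    simp only [hA, hB, dif_pos h]
    exact ⟨h.choose_spec.choose_spec.1, h.choose_spec.choose_spec.2.1,
      h.choose_spec.choose_spec.2.2⟩
  -- adjacency witnesses
  set q : Fin n → Fin n → ℝ := fun u v =>
    if h : (I u ∩ I v).Nonempty then h.choose else 0 with hq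
  have hqmem : ∀ u v, (I u ∩ I v).Nonempty → q u v ∈ I u ∩ I v := by
    intro u v h
    simp only [hq, dif_pos h]
    exact h.choose_spec
  have hJ2 : ∀ v, ∃ p q' : ℝ, p < q' ∧ p ∈ J v ∧ q' ∈ J v := by
    intro v; obtain ⟨_, _, p, q', h1, h2, h3⟩ := hJ v; exact ⟨p, q', h1, h2, h3⟩
  have hne : (Finset.univ : Finset (Fin n)).Nonempty := by
    simpa [Finset.univ_nonempty_iff, Fin.pos_iff_nonempty] using Fin.pos_iff_nonempty.mp hn
  set R : ℝ := 1 + ((Finset.univ.sup' hne fun v => |A (J v)| ⊔ |Bf (J v)|) ⊔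
      (Finset.univ.sup' hne fun u => Finset.univ.sup' hne fun v => |q u v|)) with hRdef
  have hRb1 : ∀ v, |A (J v)| ≤ R - 1 := by
    intro v
    have := Finset.le_sup' (fun v => |A (J v)| ⊔ |Bf (J v)|) (Finset.mem_univ v)
    have h2 := le_max_left (α := ℝ) |A (J v)| |Bf (J v)|
    rw [hRdef]; push_cast
    calc |A (J v)| ≤ _ := le_trans h2 this
    _ ≤ _ := by rw [add_sub_cancel_left]; exact le_max_left _ _
  have hRb2 : ∀ v, |Bf (J v)| ≤ R - 1 := by
    intro v
    have := Finset.le_sup' (fun v => |A (J v)| ⊔ |Bf (J v)|) (Finset.mem_univ v)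
    have h2 := le_max_right (α := ℝ) |A (J v)| |Bf (J v)|
    rw [hRdef]
    calc |Bf (J v)| ≤ _ := le_trans h2 this
    _ ≤ _ := by rw [add_sub_cancel_left]; exact le_max_left _ _
  have hRb3 : ∀ u v, |q u v| ≤ R - 1 := by
    intro u v
    have h1 := Finset.le_sup' (fun v => |q u v|) (Finset.mem_univ v)
    have h2 := Finset.le_sup' (fun u => Finset.univ.sup' hne fun v => |q u v|)
      (Finset.mem_univ u)
    rw [hRdef]
    calc |q u v| ≤ _ := h1
    _ ≤ _ := h2
    _ ≤ _ := by rw [add_sub_cancel_left]; exact le_max_right _ _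
  have hR0 : (0:ℝ) < R := by
    have := hRb1 ⟨0, hn⟩
    have h0 := abs_nonneg (A (J ⟨0, hn⟩))
    linarith
  have hRmem : ∀ x : ℝ, |x| ≤ R - 1 → x ∈ Set.Icc (-R) R := by
    intro x hx
    rw [abs_le] at hx
    constructor <;> [linarith [hx.1]; linarith [hx.2]]
  -- truncated sets
  set I₂ : Fin n → Set ℝ := fun v => I v ∩ Set.Icc (-R) R with hI2
  set J₂ : Fin n → Set ℝ := fun v => J v ∩ Set.Icc (-R) R with hJ2d
  have hJ₂pts : ∀ v, ∃ p q' : ℝ, p < q' ∧ p ∈ J₂ v ∧ q' ∈ J₂ v := by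
    intro v
    obtain ⟨hlt, hmA, hmB⟩ := hABmem (J v) (hJ2 v)
    exact ⟨A (J v), Bf (J v), hlt, ⟨hmA, hRmem _ (hRb1 v)⟩, ⟨hmB, hRmem _ (hRb2 v)⟩⟩
  refine ⟨{
    n := n, R := R, hR := hR0
    I := I₂, f := f, J := J₂, c := c
    a := fun v => A (J₂ v), b := fun v => Bf (J₂ v)
    npos := hn
    Inonempty := ?_, Iconv := ?_, Isub := ?_
    fle := hfle, proper := ?_, top := htop
    Jsub := ?_, Jconv := ?_, ab_mem := ?_, ab_eq := ?_, Jdisj := ?_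
    cneg := hcneg, empt := ?_, sparse := ?_, support := ?_ }⟩
  · -- Inonempty
    intro v
    obtain ⟨p, q', _, hp, _⟩ := hJ₂pts v
    exact ⟨p, (hJ v).1 hp.1, hp.2⟩
  · intro v; exact ((hrep v).2.inter (convex_Icc _ _))
  · intro v; exact Set.inter_subset_right
  · intro u v huv h
    exact hprop u v ⟨huv, h.mono (Set.inter_subset_inter
      Set.inter_subset_left Set.inter_subset_left)⟩
  · intro v; exact Set.inter_subset_inter_left _ (hJ v).1
  · intro v; exact ((hJ v).2.1.inter (convex_Icc _ _))
  · intro v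
    obtain ⟨hlt, hmA, hmB⟩ := hABmem (J₂ v) (hJ₂pts v)
    exact ⟨hmA, hmB, hlt⟩
  · intro u v h; rw [h]; exact ⟨rfl, rfl⟩
  · intro u v h
    have h' : (J u ∩ J v).Nonempty := h.mono
      (Set.inter_subset_inter Set.inter_subset_left Set.inter_subset_left)
    rw [hJ2d]; simp only [hJdisj u v h']
  · intro v u h
    exact hempt v u (h.mono
      (Set.inter_subset_inter Set.inter_subset_left Set.inter_subset_left))
  · intro v
    refine le_trans ?_ (hsparse v)
    have hsub : ((f '' {u | (I₂ u ∩ J₂ v).Nonempty}) ∩ Set.Ioc (c v) 0) ⊆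
        ((f '' {u | (I u ∩ J v).Nonempty}) ∩ Set.Ioc (c v) 0) := by
      apply Set.inter_subset_inter_left
      apply Set.image_mono
      intro u hu
      exact hu.mono (Set.inter_subset_inter Set.inter_subset_left Set.inter_subset_left)
    have hfin : ((f '' {u | (I u ∩ J v).Nonempty}) ∩ Set.Ioc (c v) 0).Finite :=
      ((Set.toFinite _).image f).inter_of_left _
    exact_mod_cast Nat.cast_le.mpr (Set.ncard_le_ncard hsub hfin)
  · intro v m h1 h2
    obtain ⟨u, hu, hfu⟩ := hsupp v m h1 h2
    refine ⟨u, ?_, hfu⟩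
    rcases hu with h | hadj
    · exact Or.inl h
    · obtain ⟨hne', hint⟩ := hadj
      refine Or.inr ⟨hne', ?_⟩
      have := hqmem u v hint
      exact ⟨q u v, ⟨this.1, hRmem _ (hRb3 u v)⟩, this.2, hRmem _ (hRb3 u v)⟩


variable {r : ℝ}

/-- depth bound -/
def GoodCap.P (C : GoodCap r) : ℕ := Finset.univ.sup fun v => (-C.c v).toNat
/-- color depth bound -/
def GoodCap.F (C : GoodCap r) : ℕ := Finset.univ.sup fun v => (-C.f v).toNat
/-- the additive constant -/
noncomputable def GoodCap.B (C : GoodCap r) : ℝ := C.n + (C.P + C.F)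

lemma GoodCap.c_ge (C : GoodCap r) (v : Fin C.n) : -(C.P : ℤ) ≤ C.c v := by
  have h1 : (-C.c v).toNat ≤ C.P :=
    Finset.le_sup (f := fun v => (-C.c v).toNat) (Finset.mem_univ v)
  have h2 : ((-C.c v).toNat : ℤ) = -C.c v := Int.toNat_of_nonneg (by linarith [C.cneg v])
  omega

lemma GoodCap.f_ge (C : GoodCap r) (v : Fin C.n) : -(C.F : ℤ) ≤ C.f v := by
  have h1 : (-C.f v).toNat ≤ C.F :=
    Finset.le_sup (f := fun v => (-C.f v).toNat) (Finset.mem_univ v)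
  have h2 : ((-C.f v).toNat : ℤ) = -C.f v := Int.toNat_of_nonneg (by linarith [C.fle v])
  omega

lemma GoodCap.B_nonneg (C : GoodCap r) : 0 ≤ C.B := by
  have : (0:ℝ) ≤ C.n := Nat.cast_nonneg _
  have : (0:ℝ) ≤ ((C.P + C.F : ℕ):ℝ) := Nat.cast_nonneg _
  unfold GoodCap.B; push_cast at *; linarith

/-- The main recursive construction: for every `s` and every nondegenerate
closed interval, there is a "generalized wall" with colors `1..s` whose
intervals live inside the given interval, and whose width is at most
`s/r + B`. -/
lemma GoodCap.build (C : GoodCap r) (hr : 1 ≤ r) : ∀ s : ℕ, ∀ α β : ℝ, α < β →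
    ∃ (V : Type) (_ : Fintype V) (Iv : V → Set ℝ) (g : V → ℕ),
      (∀ w, (Iv w).Nonempty ∧ Convex ℝ (Iv w) ∧ Iv w ⊆ Icc α β) ∧
      (∀ u w, u ≠ w → (Iv u ∩ Iv w).Nonempty → g u ≠ g w) ∧
      (∀ w, 1 ≤ g w ∧ g w ≤ s) ∧
      (∀ w t, 1 ≤ t → t ≤ g w → ∃ u, (u = w ∨ (Iv u ∩ Iv w).Nonempty) ∧ g u = t) ∧
      (∀ t, 1 ≤ t → t ≤ s → ∃ w, g w = t) ∧
      (∀ x : ℝ, ({w | x ∈ Iv w}.ncard : ℝ) ≤ s / r + C.B) := by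
  have hr0 : (0:ℝ) < r := lt_of_lt_of_le one_pos hr
  intro s
  induction s using Nat.strong_induction_on with
  | _ s IH =>
  intro α β hαβ
  by_cases hs : s ≤ C.P + C.F
  · -- base case: a clique of size s
    classical
    refine ⟨Fin s, inferInstance, fun _ => Icc α β, fun i => (i : ℕ) + 1,
      ?_, ?_, ?_, ?_, ?_, ?_⟩
    · intro w; exact ⟨⟨α, le_refl α, le_of_lt hαβ⟩, convex_Icc _ _, subset_rfl⟩
    · intro u w huw _
      simp only [ne_eq, Nat.add_right_cancel_iff]
      exact fun h => huw (Fin.ext h)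
    · intro w; exact ⟨Nat.le_add_left 1 _, by have := w.isLt; simp only; omega⟩
    · intro w t ht1 ht2
      have ht2' : t ≤ (w : ℕ) + 1 := ht2
      have hw := w.isLt
      refine ⟨⟨t - 1, by omega⟩, ?_, by show t - 1 + 1 = t; omega⟩
      by_cases h : (⟨t - 1, by omega⟩ : Fin s) = w
      · exact Or.inl h
      · exact Or.inr ⟨α, ⟨le_refl _, le_of_lt hαβ⟩, le_refl _, le_of_lt hαβ⟩
    · intro t ht1 ht2; exact ⟨⟨t - 1, by omega⟩, by show t - 1 + 1 = t; omega⟩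
    · intro x
      have h1 : {w : Fin s | x ∈ Icc α β}.ncard ≤ s := by
        have := Set.ncard_le_ncard (Set.subset_univ {w : Fin s | x ∈ Icc α β})
          Set.finite_univ
        rwa [Set.ncard_univ, Nat.card_eq_fintype_card, Fintype.card_fin] at this
      have h2 : (s:ℝ) ≤ s / r + C.B := by
        have hB : (s:ℝ) ≤ C.B := by
          unfold GoodCap.B
          have : (s:ℝ) ≤ ((C.P + C.F : ℕ) : ℝ) := Nat.cast_le.mpr hs
          push_cast at *
          have hn : (0:ℝ) ≤ C.n := Nat.cast_nonneg _
          linarith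
        have : (0:ℝ) ≤ s / r := div_nonneg (Nat.cast_nonneg _) (le_of_lt hr0)
        linarith
      calc ({w : Fin s | x ∈ Icc α β}.ncard : ℝ) ≤ (s:ℝ) := Nat.cast_le.mpr h1
      _ ≤ _ := h2
  · -- recursive case
    push_neg at hs
    classical
    have hR := C.hR
    set p : ℝ := (β - α) / (2 * C.R) with hp
    have hp0 : 0 < p := div_pos (by linarith) (by linarith)
    set φ : ℝ → ℝ := fun x => p * x + (α + p * C.R) with hφ
    have hφmono : StrictMono φ := by
      intro x y hxy; simp only [hφ]; nlinarith
    have hφinj : Function.Injective φ := hφmono.injective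
    have h2R : p * (2 * C.R) = β - α := by
      rw [hp]; field_simp
    have hφIcc : ∀ x ∈ Icc (-C.R) C.R, φ x ∈ Icc α β := by
      intro x hx
      constructor
      · simp only [hφ]; nlinarith [hx.1]
      · simp only [hφ]; nlinarith [hx.2]
    have hconvimg : ∀ S : Set ℝ, Convex ℝ S → Convex ℝ (φ '' S) := by
      intro S hS; exact convex_affine_image hS
    have himg_inter : ∀ A B : Set ℝ, (φ '' A ∩ φ '' B).Nonempty → (A ∩ B).Nonempty := by
      rintro A B ⟨x, ⟨a, ha, hax⟩, ⟨b', hb', hbx⟩⟩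
      exact ⟨a, ha, (hφinj (hax.trans hbx.symm)) ▸ hb'⟩
    set M : Fin C.n → ℕ := fun v => ((s:ℤ) + C.c v).toNat with hMdef
    have hscast : (C.P : ℤ) + (C.F : ℤ) < (s:ℤ) := by exact_mod_cast hs
    have hM : ∀ v, (M v : ℤ) = (s:ℤ) + C.c v := by
      intro v
      have := C.c_ge v
      exact Int.toNat_of_nonneg (by omega)
    have hMlt : ∀ v, M v < s := by
      intro v
      have h1 := hM v
      have h2 := C.cneg v
      omega
    -- slots inside the J intervals
    set la : Fin C.n → ℝ := fun v => φ (C.a v) with hla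
    set lb : Fin C.n → ℝ := fun v => φ (C.b v) with hlb
    set hv : Fin C.n → ℝ := fun v => (lb v - la v) / (3 * C.n) with hhv
    have hnpos : (0:ℝ) < 3 * C.n := by
      have h := C.npos
      have : (0:ℝ) < C.n := by exact_mod_cast h
      linarith
    have hvpos : ∀ v, 0 < hv v := by
      intro v
      exact div_pos (sub_pos.mpr (hφmono (C.ab_mem v).2.2)) hnpos
    set sl : Fin C.n → ℝ := fun v => la v + (3 * (v:ℕ)) * hv v with hsl
    set sr : Fin C.n → ℝ := fun v => sl v + hv v with hsr
    have hslr : ∀ v, sl v < sr v := fun v => lt_add_of_pos_right _ (hvpos v)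
    have h3n : ∀ v : Fin C.n, (3 * C.n) * hv v = lb v - la v := by
      intro v
      rw [hhv]
      have : (3 * (C.n:ℝ)) ≠ 0 := ne_of_gt hnpos
      have hn0 : (C.n:ℝ) ≠ 0 := by have := C.npos; exact_mod_cast this.ne'
      field_simp
    have hslot_Icc : ∀ v, Icc (sl v) (sr v) ⊆ Icc (la v) (lb v) := by
      intro v
      apply Icc_subset_Icc
      · have : (0:ℝ) ≤ (3 * (v:ℕ)) * hv v :=
          mul_nonneg (by positivity) (le_of_lt (hvpos v))
        simp only [hsl]; linarith
      · have hvlt : ((v:ℕ):ℝ) ≤ (C.n : ℝ) - 1 := by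
          have := v.isLt
          have : ((v:ℕ):ℝ) + 1 ≤ (C.n:ℝ) := by exact_mod_cast Nat.succ_le_of_lt v.isLt
          linarith
        have := h3n v
        have := hvpos v
        simp only [hsr, hsl]
        nlinarith
    have hslot_sub : ∀ v, Icc (sl v) (sr v) ⊆ φ '' (C.J v) := by
      intro v
      refine (hslot_Icc v).trans ?_
      have hconv : Convex ℝ (φ '' C.J v) := hconvimg _ (C.Jconv v)
      have hmema : la v ∈ φ '' C.J v := ⟨C.a v, (C.ab_mem v).1, rfl⟩
      have hmemb : lb v ∈ φ '' C.J v := ⟨C.b v, (C.ab_mem v).2.1, rfl⟩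
      exact fun x hx => hconv.ordConnected.out hmema hmemb hx
    have hslotdisj : ∀ v v', v ≠ v' → ∀ x, x ∈ Icc (sl v) (sr v) →
        x ∈ Icc (sl v') (sr v') → False := by
      intro v v' hvv x hx hx'
      by_cases hJe : C.J v = C.J v'
      · obtain ⟨hae, hbe⟩ := C.ab_eq v v' hJe
        have hlae : la v = la v' := by simp only [hla, hae]
        have hlbe : lb v = lb v' := by simp only [hlb, hbe]
        have hhve : hv v = hv v' := by simp only [hhv, hlae, hlbe]
        have hvne : (v:ℕ) ≠ (v':ℕ) := fun h => hvv (Fin.ext h)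
        obtain ⟨hx1, hx2⟩ := hx
        obtain ⟨hx1', hx2'⟩ := hx'
        simp only [hsr, hsl] at hx1 hx2 hx1' hx2'
        rcases Nat.lt_or_ge (v:ℕ) (v':ℕ) with hlt | hge
        · have hc : ((v:ℕ):ℝ) + 1 ≤ ((v':ℕ):ℝ) := by exact_mod_cast Nat.succ_le_of_lt hlt
          have := hvpos v
          rw [hlae, hhve] at hx2
          nlinarith
        · have hlt' : (v':ℕ) < (v:ℕ) := by omega
          have hc : ((v':ℕ):ℝ) + 1 ≤ ((v:ℕ):ℝ) := by exact_mod_cast Nat.succ_le_of_lt hlt'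
          have := hvpos v'
          rw [hlae, hhve] at hx1
          nlinarith
      · have hJne : (C.J v ∩ C.J v').Nonempty → False := fun h => hJe (C.Jdisj v v' h)
        apply hJne
        exact himg_inter _ _ ⟨x, hslot_sub v hx, hslot_sub v' hx'⟩
    -- recursive children
    have HC : ∀ v : Fin C.n,
        ∃ (V : Type) (_ : Fintype V) (Iv : V → Set ℝ) (g : V → ℕ),
          (∀ w, (Iv w).Nonempty ∧ Convex ℝ (Iv w) ∧ Iv w ⊆ Icc (sl v) (sr v)) ∧
          (∀ u w, u ≠ w → (Iv u ∩ Iv w).Nonempty → g u ≠ g w) ∧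
          (∀ w, 1 ≤ g w ∧ g w ≤ M v) ∧
          (∀ w t, 1 ≤ t → t ≤ g w → ∃ u, (u = w ∨ (Iv u ∩ Iv w).Nonempty) ∧ g u = t) ∧
          (∀ t, 1 ≤ t → t ≤ M v → ∃ w, g w = t) ∧
          (∀ x : ℝ, ({w | x ∈ Iv w}.ncard : ℝ) ≤ (M v) / r + C.B) :=
      fun v => IH (M v) (hMlt v) (sl v) (sr v) (hslr v)
    choose W instW Iw gw h1 h2 h3 h4 h5 h6 using HC
    letI : ∀ v, Fintype (W v) := instW
    -- cap colors
    have hgcap : ∀ u, ((C.f u + (s:ℤ)).toNat : ℤ) = C.f u + s := by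
      intro u
      have := C.f_ge u
      exact Int.toNat_of_nonneg (by omega)
    have hgcap1 : ∀ u, 1 ≤ (C.f u + (s:ℤ)).toNat := by
      intro u
      have := hgcap u
      have := C.f_ge u
      omega
    have hgcap_le : ∀ u, (C.f u + (s:ℤ)).toNat ≤ s := by
      intro u
      have := hgcap u
      have := C.fle u
      omega
    have hsubIw : ∀ v (w : W v), Iw v w ⊆ φ '' (C.J v) :=
      fun v w => (h1 v w).2.2.trans (hslot_sub v)
    have hcap_sub_adj : ∀ u v (w : W v),
        ((φ '' C.I u) ∩ Iw v w).Nonempty → (C.I u ∩ C.J v).Nonempty := by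
      intro u v w hne
      exact himg_inter _ _ (hne.mono (Set.inter_subset_inter_right _ (hsubIw v w)))
    have key_mixed : ∀ u v (w : W v),
        ((φ '' C.I u) ∩ Iw v w).Nonempty → gw v w < (C.f u + (s:ℤ)).toNat := by
      intro u v w hne
      have hIJ := hcap_sub_adj u v w hne
      have hc := C.empt v u hIJ
      have h3' := (h3 v w).2
      have := hM v
      have := hgcap u
      omega
    refine ⟨(Fin C.n) ⊕ (Σ v, W v), inferInstance,
      Sum.elim (fun u => φ '' C.I u) (fun q => Iw q.1 q.2),
      Sum.elim (fun u => (C.f u + (s:ℤ)).toNat) (fun q => gw q.1 q.2),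
      ?_, ?_, ?_, ?_, ?_, ?_⟩
    · -- representation
      rintro (u | ⟨v, w⟩)
      · refine ⟨(C.Inonempty u).image φ, hconvimg _ (C.Iconv u), ?_⟩
        rintro _ ⟨x, hx, rfl⟩
        exact hφIcc x (C.Isub u hx)
      · refine ⟨(h1 v w).1, (h1 v w).2.1, ?_⟩
        intro x hx
        have : x ∈ φ '' C.I v := Set.image_mono (C.Jsub v) (hsubIw v w hx)
        obtain ⟨y, hy, rfl⟩ := this
        exact hφIcc y (C.Isub v hy)
    · -- properness
      rintro (u | ⟨v, w⟩) (u' | ⟨v', w'⟩) hne hint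
      · have hne' : u ≠ u' := fun h => hne (by rw [h])
        have hff := C.proper u u' hne' (himg_inter _ _ hint)
        simp only [Sum.elim_inl]
        have := hgcap u
        have := hgcap u'
        omega
      · simp only [Sum.elim_inl, Sum.elim_inr]
        exact (Nat.ne_of_lt (key_mixed u v' w' hint)).symm
      · simp only [Sum.elim_inl, Sum.elim_inr]
        rw [Set.inter_comm] at hint
        exact Nat.ne_of_lt (key_mixed u' v w hint)
      · simp only [Sum.elim_inr]
        by_cases hvv : v = v'
        · subst hvv
          have hww : w ≠ w' := by
            intro h
            exact hne (by rw [h])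
          exact h2 v w w' hww hint
        · exfalso
          obtain ⟨x, hx1, hx2⟩ := hint
          exact hslotdisj v v' hvv x ((h1 v w).2.2 hx1) ((h1 v' w').2.2 hx2)
    · -- color bounds
      rintro (u | ⟨v, w⟩)
      · exact ⟨hgcap1 u, hgcap_le u⟩
      · exact ⟨(h3 v w).1, le_trans (h3 v w).2 (le_of_lt (hMlt v))⟩
    · -- support
      rintro (u | ⟨v, w⟩) t ht1 ht2
      · simp only [Sum.elim_inl] at ht2
        by_cases hcase : M u < t
        · have hm1 : C.c u < (t:ℤ) - s := by
            have := hM u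
            omega
          have hm2 : (t:ℤ) - s ≤ C.f u := by
            have := hgcap u
            omega
          obtain ⟨w', hw', hfw'⟩ := C.support u ((t:ℤ) - s) hm1 hm2
          refine ⟨Sum.inl w', ?_, ?_⟩
          · rcases hw' with rfl | ⟨hne', hint'⟩
            · exact Or.inl rfl
            · obtain ⟨x, hx⟩ := hint'
              exact Or.inr ⟨φ x, Set.mem_image_of_mem _ hx.1, Set.mem_image_of_mem _ hx.2⟩
          · simp only [Sum.elim_inl]
            have := hgcap w'
            omega
        · obtain ⟨w', hw'⟩ := h5 u t ht1 (le_of_not_gt hcase)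
          refine ⟨Sum.inr ⟨u, w'⟩, Or.inr ?_, hw'⟩
          obtain ⟨x, hx⟩ := (h1 u w').1
          exact ⟨x, hx, Set.image_mono (C.Jsub u) (hsubIw u w' hx)⟩
      · simp only [Sum.elim_inr] at ht2
        obtain ⟨u', hu', hgu'⟩ := h4 v w t ht1 ht2
        rcases hu' with rfl | hint'
        · exact ⟨Sum.inr ⟨v, u'⟩, Or.inl rfl, hgu'⟩
        · exact ⟨Sum.inr ⟨v, u'⟩, Or.inr hint', hgu'⟩
    · -- all colors attained
      intro t ht1 ht2
      obtain ⟨v0, hv0⟩ := C.top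
      by_cases hcase : M v0 < t
      · have hm1 : C.c v0 < (t:ℤ) - s := by
          have := hM v0
          omega
        have hm2 : (t:ℤ) - s ≤ C.f v0 := by
          rw [hv0]
          omega
        obtain ⟨w', _, hfw'⟩ := C.support v0 ((t:ℤ) - s) hm1 hm2
        refine ⟨Sum.inl w', ?_⟩
        simp only [Sum.elim_inl]
        have := hgcap w'
        omega
      · obtain ⟨w', hw'⟩ := h5 v0 t ht1 (le_of_not_gt hcase)
        exact ⟨Sum.inr ⟨v0, w'⟩, hw'⟩
    · -- width bound
      intro x
      set T : Set (Fin C.n) := {u | x ∈ φ '' C.I u} with hT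
      set Ssub : Set (Σ v, W v) := {q : Σ v, W v | x ∈ Iw q.1 q.2} with hSsub
      have hSeq : {w : (Fin C.n) ⊕ (Σ v, W v) |
          x ∈ Sum.elim (fun u => φ '' C.I u) (fun q => Iw q.1 q.2) w} =
          Sum.inl '' T ∪ Sum.inr '' Ssub := by
        ext (u | q)
        · simp [hT]
        · simp [hSsub]
      rw [hSeq]
      have hcard1 : (Sum.inl '' T ∪ Sum.inr '' Ssub).ncard ≤ T.ncard + Ssub.ncard := by
        refine le_trans (Set.ncard_union_le _ _) ?_
        rw [Set.ncard_image_of_injective _ Sum.inl_injective,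
          Set.ncard_image_of_injective _ Sum.inr_injective]
      by_cases hx : ∃ v, x ∈ Icc (sl v) (sr v)
      · obtain ⟨vs, hvs⟩ := hx
        -- cap part bound via sparseness
        have hTsub : C.f '' T ⊆
            (C.f '' {u | (C.I u ∩ C.J vs).Nonempty}) ∩ Set.Ioc (C.c vs) 0 := by
          rintro _ ⟨u, hu, rfl⟩
          have hIJ : (C.I u ∩ C.J vs).Nonempty :=
            himg_inter _ _ ⟨x, hu, hslot_sub vs hvs⟩
          exact ⟨⟨u, hIJ, rfl⟩, C.empt vs u hIJ, C.fle u⟩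
        have hinjT : Set.InjOn C.f T := by
          intro u hu u' hu' hfe
          by_contra hne'
          exact C.proper u u' hne' (himg_inter _ _ ⟨x, hu, hu'⟩) hfe
        have hTbound : (T.ncard : ℝ) ≤ -(C.c vs : ℝ) / r := by
          have e1 : T.ncard = (C.f '' T).ncard := (Set.ncard_image_of_injOn hinjT).symm
          have hfin : ((C.f '' {u | (C.I u ∩ C.J vs).Nonempty}) ∩
              Set.Ioc (C.c vs) 0).Finite := ((Set.toFinite _).image _).inter_of_left _
          have e2 : (C.f '' T).ncard ≤ ((C.f '' {u | (C.I u ∩ C.J vs).Nonempty}) ∩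
              Set.Ioc (C.c vs) 0).ncard := Set.ncard_le_ncard hTsub hfin
          calc (T.ncard : ℝ) = ((C.f '' T).ncard : ℝ) := by rw [e1]
          _ ≤ _ := Nat.cast_le.mpr e2
          _ ≤ _ := C.sparse vs
        -- sub part bound
        have hSsubsub : Ssub ⊆ Sigma.mk vs '' {w | x ∈ Iw vs w} := by
          rintro ⟨qv, qw⟩ hq
          have hq1 : qv = vs := by
            by_contra hc
            exact hslotdisj qv vs hc x ((h1 qv qw).2.2 hq) hvs
          subst hq1
          exact ⟨qw, hq, rfl⟩
        have hSsubbound : (Ssub.ncard : ℝ) ≤ (M vs : ℝ) / r + C.B := by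
          have e1 : Ssub.ncard ≤ (Sigma.mk vs '' {w | x ∈ Iw vs w}).ncard :=
            Set.ncard_le_ncard hSsubsub (Set.toFinite _)
          have e2 : (Sigma.mk vs '' {w | x ∈ Iw vs w}).ncard = {w | x ∈ Iw vs w}.ncard :=
            Set.ncard_image_of_injective _ sigma_mk_injective
          calc (Ssub.ncard : ℝ) ≤ _ := Nat.cast_le.mpr (e1.trans (le_of_eq e2))
          _ ≤ _ := h6 vs x
        have hMcast : (M vs : ℝ) = (s:ℝ) + (C.c vs : ℝ) := by
          exact_mod_cast hM vs
        calc ((Sum.inl '' T ∪ Sum.inr '' Ssub).ncard : ℝ)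
            ≤ (T.ncard : ℝ) + (Ssub.ncard : ℝ) := by exact_mod_cast Nat.cast_le.mpr hcard1
        _ ≤ -(C.c vs : ℝ) / r + ((M vs : ℝ) / r + C.B) := add_le_add hTbound hSsubbound
        _ = (-(C.c vs : ℝ) + (M vs : ℝ)) / r + C.B := by ring
        _ = (s:ℝ) / r + C.B := by rw [hMcast]; ring_nf
      · push_neg at hx
        have hempty : Ssub = ∅ := by
          ext ⟨qv, qw⟩
          simp only [hSsub, Set.mem_setOf_eq, Set.mem_empty_iff_false, iff_false]
          intro hq
          exact hx qv ((h1 qv qw).2.2 hq)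
        have hTn : T.ncard ≤ C.n := by
          have := Set.ncard_le_ncard (Set.subset_univ T) Set.finite_univ
          rwa [Set.ncard_univ, Nat.card_eq_fintype_card, Fintype.card_fin] at this
        have hBn : (C.n : ℝ) ≤ C.B := by
          unfold GoodCap.B
          have : (0:ℝ) ≤ ((C.P:ℝ) + (C.F:ℝ)) := by positivity
          push_cast
          linarith
        have hsr' : (0:ℝ) ≤ (s:ℝ) / r := div_nonneg (Nat.cast_nonneg _) (le_of_lt hr0)
        calc ((Sum.inl '' T ∪ Sum.inr '' Ssub).ncard : ℝ)
            ≤ (T.ncard : ℝ) + (Ssub.ncard : ℝ) := by exact_mod_cast Nat.cast_le.mpr hcard1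
        _ ≤ (C.n : ℝ) + 0 := by
            rw [hempty]
            simp only [Set.ncard_empty, Nat.cast_zero]
            exact add_le_add (Nat.cast_le.mpr hTn) (le_refl 0)
        _ ≤ (s:ℝ) / r + C.B := by linarith


/-- A wall can be reproduced by first fit: present the vertices in order of
increasing wall color. -/
lemma chiFF_ge_of_wall {m : ℕ} (hm : 0 < m) (I' : Fin m → Set ℝ) (f' : Fin m → ℕ)
    (hwall : IsWall (intervalGraph I') f') :
    (Finset.univ.image f').card ≤ chiFF (intervalGraph I') := by
  classical
  set G := intervalGraph I' with hG
  set σ := Tuple.sort f' with hσ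
  have hmono : Monotone (f' ∘ σ) := Tuple.monotone_sort f'
  set v : ℕ → Fin m := fun i => if h : i < m then σ ⟨i, h⟩ else σ ⟨0, hm⟩ with hvdef
  have hv : ∀ (k : Fin m), v (k : ℕ) = σ k := by
    intro k
    simp only [hvdef, dif_pos k.isLt, Fin.eta]
  have hbij : Function.Bijective (fun k : Fin m => v (k : ℕ)) := by
    have he : (fun k : Fin m => v (k : ℕ)) = ⇑σ := funext fun k => hv k
    rw [he]
    exact σ.bijective
  have hFF : ∀ i, i < m → firstFitColor G v i = f' (v i) := by
    intro i
    induction i using Nat.strong_induction_on with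
    | _ i IH =>
    intro him
    have hmem : f' (v i) ∈ {c : ℕ | 0 < c ∧ ∀ j, ∀ _ : j < i,
        G.Adj (v j) (v i) → firstFitColor G v j ≠ c} := by
      refine ⟨hwall.1 (v i), ?_⟩
      intro j hj hadj
      rw [IH j hj (lt_trans hj him)]
      exact hwall.2.1 (v j) (v i) hadj
    have hexcl : ∀ c, 0 < c → c < f' (v i) → c ∉ {c : ℕ | 0 < c ∧ ∀ j, ∀ _ : j < i,
        G.Adj (v j) (v i) → firstFitColor G v j ≠ c} := by
      intro c hc0 hclt hcS
      obtain ⟨u, hu, hfu⟩ := hwall.2.2 (v i) c hc0 (le_of_lt hclt)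
      rcases hu with rfl | hadj
      · exact absurd hfu (ne_of_gt hclt)
      · set j : ℕ := ((σ.symm u : Fin m) : ℕ) with hj
        have hjm : j < m := (σ.symm u).isLt
        have hvj : v j = u := by
          have : v j = σ ⟨j, hjm⟩ := by simp only [hvdef, dif_pos hjm]
          rw [this]
          have : (⟨j, hjm⟩ : Fin m) = σ.symm u := Fin.ext rfl
          rw [this, Equiv.apply_symm_apply]
        have hji : j < i := by
          rcases lt_or_ge j i with h | h
          · exact h
          · exfalso
            have hle : (⟨i, him⟩ : Fin m) ≤ ⟨j, hjm⟩ := h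
            have h2 : f' (σ ⟨i, him⟩) ≤ f' (σ ⟨j, hjm⟩) := hmono hle
            have e1 : v i = σ ⟨i, him⟩ := by simp only [hvdef, dif_pos him]
            have e2 : v j = σ ⟨j, hjm⟩ := by simp only [hvdef, dif_pos hjm]
            rw [← e1, ← e2, hvj, hfu] at h2
            omega
        have hadj' : G.Adj (v j) (v i) := by rw [hvj]; exact hadj
        have := hcS.2 j hji hadj'
        rw [IH j hji hjm, hvj, hfu] at this
        exact this rfl
    rw [firstFitColor]
    apply le_antisymm
    · exact Nat.sInf_le hmem
    · by_contra hlt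
      push_neg at hlt
      have hval := Nat.sInf_mem ⟨_, hmem⟩
      exact hexcl _ hval.1 hlt hval
  have himg : (Finset.range m).image (firstFitColor G v) = Finset.univ.image f' := by
    ext t
    simp only [Finset.mem_image, Finset.mem_range, Finset.mem_univ, true_and]
    constructor
    · rintro ⟨i, hi, hti⟩
      exact ⟨v i, by rw [← hFF i hi]; exact hti⟩
    · rintro ⟨w, hw⟩
      obtain ⟨k, hk⟩ := hbij.2 w
      refine ⟨(k : ℕ), k.isLt, ?_⟩
      rw [hFF _ k.isLt]
      have : v (k : ℕ) = w := hk
      rw [this, hw]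
  have hmem2 : (Finset.univ.image f').card ∈ {m' : ℕ | ∃ v' : ℕ → Fin m,
      Function.Bijective (fun k : Fin m => v' (k : ℕ)) ∧
      m' = ((Finset.range m).image (firstFitColor G v')).card} :=
    ⟨v, hbij, by rw [himg]⟩
  have hbdd : BddAbove {m' : ℕ | ∃ v' : ℕ → Fin m,
      Function.Bijective (fun k : Fin m => v' (k : ℕ)) ∧
      m' = ((Finset.range m).image (firstFitColor G v')).card} := by
    refine ⟨m, ?_⟩
    rintro y ⟨v', _, rfl⟩
    calc ((Finset.range m).image (firstFitColor G v')).card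
        ≤ (Finset.range m).card := Finset.card_image_le
    _ = m := Finset.card_range m
  exact le_csSup hbdd hmem2


/-- Main assembly: from a good cap, for every `k` build a wall on `Fin m`
with clique number exactly `k` and at least `r*k - (r*B+1)` colors. -/
lemma GoodCap.key (C : GoodCap r) (hr : 1 ≤ r) (k : ℕ) :
    ∃ (m : ℕ) (I' : Fin m → Set ℝ) (f' : Fin m → ℕ),
      IsIntervalRep I' ∧
      IsWall (intervalGraph I') f' ∧
      (intervalGraph I').cliqueNum = k ∧
      r * (k : ℝ) - (r * C.B + 1) ≤ ((Finset.univ.image f').card : ℝ) ∧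
      (1 ≤ k → 0 < m) := by
  classical
  have hr0 : (0:ℝ) < r := lt_of_lt_of_le one_pos hr
  set s : ℕ := ⌊r * ((k:ℝ) - C.B)⌋₊ with hsdef
  obtain ⟨V, instV, IT, gT, hT1, hT2, hT3, hT4, hT5, hT6⟩ :=
    C.build hr s 0 1 one_pos
  letI : Fintype V := instV
  set IW : V ⊕ Fin k → Set ℝ := Sum.elim IT (fun _ => Icc (2:ℝ) 3) with hIW
  set gW : V ⊕ Fin k → ℕ := Sum.elim gT (fun j => (j:ℕ) + 1) with hgW
  set m : ℕ := Fintype.card (V ⊕ Fin k) with hm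
  set e : Fin m ≃ (V ⊕ Fin k) := (Fintype.equivFin (V ⊕ Fin k)).symm with he
  set I' : Fin m → Set ℝ := fun i => IW (e i) with hI'
  set f' : Fin m → ℕ := fun i => gW (e i) with hf'
  -- basic facts on W
  have hWrep : ∀ w, (IW w).Nonempty ∧ Convex ℝ (IW w) := by
    rintro (u | j)
    · exact ⟨(hT1 u).1, (hT1 u).2.1⟩
    · refine ⟨⟨2, ?_⟩, ?_⟩
      · show (2:ℝ) ∈ Icc (2:ℝ) 3
        norm_num
      · show Convex ℝ (Icc (2:ℝ) 3)
        exact convex_Icc _ _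
  have hWdisj : ∀ (u : V) (x : ℝ), x ∈ IT u → x ∈ Icc (2:ℝ) 3 → False := by
    intro u x hx hx2
    have := ((hT1 u).2.2 hx).2
    have := hx2.1
    linarith
  have hWprop : ∀ u w, u ≠ w → (IW u ∩ IW w).Nonempty → gW u ≠ gW w := by
    rintro (u | i) (u' | j) hne hint
    · exact hT2 u u' (fun h => hne (by rw [h])) hint
    · obtain ⟨x, hx1, hx2⟩ := hint
      exact absurd (hWdisj u x hx1 hx2) (fun h => h)
    · obtain ⟨x, hx1, hx2⟩ := hint
      exact absurd (hWdisj u' x hx2 hx1) (fun h => h)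
    · have : i ≠ j := fun h => hne (by rw [h])
      simp only [hgW, Sum.elim_inr, ne_eq, Nat.add_right_cancel_iff]
      exact fun h => this (Fin.ext h)
  have hWsupp : ∀ w t, 1 ≤ t → t ≤ gW w →
      ∃ u, (u = w ∨ (IW u ∩ IW w).Nonempty) ∧ gW u = t := by
    rintro (u | j) t ht1 ht2
    · obtain ⟨u', hu', hgu'⟩ := hT4 u t ht1 ht2
      rcases hu' with rfl | hint
      · exact ⟨Sum.inl u', Or.inl rfl, hgu'⟩
      · exact ⟨Sum.inl u', Or.inr hint, hgu'⟩
    · simp only [hgW, Sum.elim_inr] at ht2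
      have hjk : t - 1 < k := by have := j.isLt; omega
      refine ⟨Sum.inr ⟨t - 1, hjk⟩, Or.inr ?_, ?_⟩
      · exact ⟨2, ⟨le_refl _, by norm_num⟩, le_refl _, by norm_num⟩
      · simp only [hgW, Sum.elim_inr]
        omega
  have hVempty : s = 0 → IsEmpty V := by
    intro h0
    refine ⟨fun w => ?_⟩
    have := (hT3 w).1
    have := (hT3 w).2
    omega
  have hWwidth : ∀ x : ℝ, ({w : V ⊕ Fin k | x ∈ IW w}.ncard) ≤ k := by
    intro x
    have hSeq : {w : V ⊕ Fin k | x ∈ IW w} =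
        Sum.inl '' {u : V | x ∈ IT u} ∪ Sum.inr '' {j : Fin k | x ∈ Icc (2:ℝ) 3} := by
      ext (u | j) <;> simp [hIW]
    rw [hSeq]
    by_cases hx23 : x ∈ Icc (2:ℝ) 3
    · have hTe : {u : V | x ∈ IT u} = ∅ := by
        ext u
        simp only [Set.mem_setOf_eq, Set.mem_empty_iff_false, iff_false]
        exact fun hx => hWdisj u x hx hx23
      rw [hTe]
      simp only [Set.image_empty, Set.empty_union]
      calc (Sum.inr '' {j : Fin k | x ∈ Icc (2:ℝ) 3}).ncard
          = {j : Fin k | x ∈ Icc (2:ℝ) 3}.ncard :=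
            Set.ncard_image_of_injective _ Sum.inr_injective
      _ ≤ (Set.univ : Set (Fin k)).ncard :=
            Set.ncard_le_ncard (Set.subset_univ _) Set.finite_univ
      _ = k := by rw [Set.ncard_univ, Nat.card_eq_fintype_card, Fintype.card_fin]
    · have hKe : {j : Fin k | x ∈ Icc (2:ℝ) 3} = ∅ := by
        ext j; simp [hx23]
      rw [hKe]
      simp only [Set.image_empty, Set.union_empty]
      rw [Set.ncard_image_of_injective _ Sum.inl_injective]
      rcases Nat.eq_zero_or_pos s with h0 | hspos
      · haveI := hVempty h0
        have : {u : V | x ∈ IT u} = ∅ := Set.eq_empty_of_isEmpty _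
        rw [this]
        simp
      · -- s ≥ 1, so the floor argument is nonnegative
        have harg : (0:ℝ) ≤ r * ((k:ℝ) - C.B) := by
          by_contra hneg
          push_neg at hneg
          have : s = 0 := by
            rw [hsdef]
            exact Nat.floor_of_nonpos (le_of_lt hneg)
          omega
        have hfl : (s:ℝ) ≤ r * ((k:ℝ) - C.B) := by
          rw [hsdef]
          exact Nat.floor_le harg
        have hdiv : (s:ℝ) / r ≤ (k:ℝ) - C.B := by
          rw [div_le_iff₀ hr0]
          calc (s:ℝ) ≤ r * ((k:ℝ) - C.B) := hfl
          _ = ((k:ℝ) - C.B) * r := by ring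
        have := hT6 x
        have hreal : ({u : V | x ∈ IT u}.ncard : ℝ) ≤ (k:ℝ) := by
          calc ({u : V | x ∈ IT u}.ncard : ℝ) ≤ (s:ℝ)/r + C.B := hT6 x
          _ ≤ ((k:ℝ) - C.B) + C.B := by linarith
          _ = (k:ℝ) := by ring
        exact_mod_cast hreal
  -- transfer to Fin m
  refine ⟨m, I', f', ?_, ?_, ?_, ?_, ?_⟩
  · intro i
    exact hWrep (e i)
  · refine ⟨fun i => ?_, fun i j hadj => ?_, fun i t ht1 ht2 => ?_⟩
    · -- positivity of colors
      rcases h : (e i) with u | j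
      · have := (hT3 u).1
        simp only [hf', hgW, h, Sum.elim_inl]
        exact this
      · simp only [hf', hgW, h, Sum.elim_inr]
        omega
    · exact hWprop (e i) (e j) (fun h => hadj.1 (e.injective h)) hadj.2
    · obtain ⟨u, hu, hgu⟩ := hWsupp (e i) t ht1 ht2
      refine ⟨e.symm u, ?_, by simpa [hf', Equiv.apply_symm_apply] using hgu⟩
      by_cases hcase : e.symm u = i
      · exact Or.inl hcase
      · rcases hu with heq | hint
        · exact absurd (by rw [heq, Equiv.symm_apply_apply]) hcase
        · refine Or.inr ⟨hcase, ?_⟩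
          simpa [hI', Equiv.apply_symm_apply] using hint
  · -- clique number
    have hwidth' : ∀ x : ℝ, ({i : Fin m | x ∈ I' i}.ncard) ≤ k := by
      intro x
      have hset : {i : Fin m | x ∈ I' i} = ⇑e.symm '' {w : V ⊕ Fin k | x ∈ IW w} := by
        ext i
        simp only [Set.mem_setOf_eq, Set.mem_image]
        constructor
        · intro hx; exact ⟨e i, hx, Equiv.symm_apply_apply _ _⟩
        · rintro ⟨w, hw, rfl⟩
          simpa [hI', Equiv.apply_symm_apply] using hw
      rw [hset, Set.ncard_image_of_injective _ e.symm.injective]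
      exact hWwidth x
    have hub : ∀ N t, (intervalGraph I').IsNClique N t → N ≤ k := by
      intro N t ht
      rcases t.eq_empty_or_nonempty with rfl | htne
      · rw [← ht.2, Finset.card_empty]
        exact Nat.zero_le k
      · have hpair : ∀ u ∈ t, ∀ w ∈ t, (I' u ∩ I' w).Nonempty := by
          intro u hu w hw
          by_cases huw : u = w
          · subst huw
            rw [Set.inter_self]
            exact (hWrep (e u)).1
          · exact (ht.1 hu hw huw).2
        obtain ⟨x, hx⟩ := helly t htne I' (fun i => (hWrep (e i)).2) hpair
        have hsub : (t : Set (Fin m)) ⊆ {i : Fin m | x ∈ I' i} := fun i hi => hx i hi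
        calc N = t.card := ht.2.symm
        _ = (t : Set (Fin m)).ncard := (Set.ncard_coe_finset t).symm
        _ ≤ {i : Fin m | x ∈ I' i}.ncard := Set.ncard_le_ncard hsub (Set.toFinite _)
        _ ≤ k := hwidth' x
    have hlb : ∃ t, (intervalGraph I').IsNClique k t := by
      refine ⟨Finset.univ.map ⟨fun j : Fin k => e.symm (Sum.inr j),
        fun a b hab => Sum.inr_injective (e.symm.injective hab)⟩, ?_, ?_⟩
      · rintro a ha b hb hab
        simp only [Finset.coe_map, Set.mem_image, Finset.mem_coe] at ha hb
        obtain ⟨ja, _, rfl⟩ := ha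
        obtain ⟨jb, _, rfl⟩ := hb
        refine ⟨hab, ?_⟩
        have ea : I' (e.symm (Sum.inr ja)) = Icc (2:ℝ) 3 := by
          simp [hI', Equiv.apply_symm_apply, hIW]
        have eb : I' (e.symm (Sum.inr jb)) = Icc (2:ℝ) 3 := by
          simp [hI', Equiv.apply_symm_apply, hIW]
        show (I' (e.symm (Sum.inr ja)) ∩ I' (e.symm (Sum.inr jb))).Nonempty
        rw [ea, eb, Set.inter_self]
        exact ⟨2, le_refl _, by norm_num⟩
      · rw [Finset.card_map, Finset.card_univ, Fintype.card_fin]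
    unfold SimpleGraph.cliqueNum
    apply le_antisymm
    · apply csSup_le
      · obtain ⟨t, ht⟩ := hlb
        exact ⟨k, t, ht⟩
      · rintro N ⟨t, ht⟩
        exact hub N t ht
    · refine le_csSup ⟨m, ?_⟩ hlb
      rintro N ⟨t, ht⟩
      calc N = t.card := ht.2.symm
      _ ≤ Fintype.card (Fin m) := Finset.card_le_univ t
      _ = m := Fintype.card_fin m
  · -- color count
    have himg : Finset.univ.image f' = Finset.univ.image gW := by
      ext t
      simp only [Finset.mem_image, Finset.mem_univ, true_and]
      constructor
      · rintro ⟨i, hi⟩; exact ⟨e i, hi⟩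
      · rintro ⟨w, hw⟩
        exact ⟨e.symm w, by simpa [hf', Equiv.apply_symm_apply] using hw⟩
    have hsubIcc : Finset.Icc 1 (max s k) ⊆ Finset.univ.image gW := by
      intro t ht
      rw [Finset.mem_Icc] at ht
      rw [Finset.mem_image]
      by_cases hts : t ≤ s
      · obtain ⟨w, hw⟩ := hT5 t ht.1 hts
        exact ⟨Sum.inl w, Finset.mem_univ _, hw⟩
      · have htk : t ≤ k := by
          rcases max_cases s k with ⟨hmax, _⟩ | ⟨hmax, _⟩ <;> omega
        refine ⟨Sum.inr ⟨t - 1, by omega⟩, Finset.mem_univ _, ?_⟩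
        simp only [hgW, Sum.elim_inr]
        omega
    have hcard : max s k ≤ (Finset.univ.image f').card := by
      rw [himg]
      calc max s k = (Finset.Icc 1 (max s k)).card := by
            rw [Nat.card_Icc]; omega
      _ ≤ (Finset.univ.image gW).card := Finset.card_le_card hsubIcc
    have hfloor : r * ((k:ℝ) - C.B) < (s:ℝ) + 1 := by
      rw [hsdef]
      exact Nat.lt_floor_add_one _
    have : r * (k:ℝ) - (r * C.B + 1) ≤ (max s k : ℝ) := by
      have h1 : (s:ℝ) ≤ (max s k : ℝ) := by exact_mod_cast Nat.le_max_left s k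
      nlinarith
    calc r * (k:ℝ) - (r * C.B + 1) ≤ (max s k : ℝ) := this
    _ ≤ _ := by exact_mod_cast hcard
  · -- positivity of m
    intro hk
    rw [hm, Fintype.card_sum, Fintype.card_fin]
    omega

end CapWall

/-- If an `r`-cap exists (`r ≥ 1`), then there is a constant `b` such that for
every `k` there is a wall whose graph has clique number exactly `k` using at
least `r·k - b` colors; in particular, `r` is at most the sup of `χ_FF/ω` over
nonempty interval graphs. -/
theorem cap_gives_walls (r : ℝ) (hr : 1 ≤ r) {n : ℕ} (I : Fin n → Set ℝ)
    (f : Fin n → ℤ) (J : Fin n → Set ℝ) (c : Fin n → ℤ)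
    (hcap : IsCap r I f J c) :
    (∃ b : ℝ, ∀ k : ℕ, ∃ (m : ℕ) (I' : Fin m → Set ℝ) (f' : Fin m → ℕ),
      IsIntervalRep I' ∧
      IsWall (intervalGraph I') f' ∧
      (intervalGraph I').cliqueNum = k ∧
      r * (k : ℝ) - b ≤ ((Finset.univ.image f').card : ℝ)) ∧
    (∀ ε : ℝ, 0 < ε → ∃ (m : ℕ) (I' : Fin m → Set ℝ),
      0 < m ∧ IsIntervalRep I' ∧
      (r - ε) * ((intervalGraph I').cliqueNum : ℝ) < (chiFF (intervalGraph I') : ℝ)) := by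
  obtain ⟨C⟩ := CapWall.goodCap_of_isCap r I f J c hcap
  constructor
  · refine ⟨r * C.B + 1, fun k => ?_⟩
    obtain ⟨m, I', f', h1, h2, h3, h4, _⟩ := C.key hr k
    exact ⟨m, I', f', h1, h2, h3, h4⟩
  · intro ε hε
    set b : ℝ := r * C.B + 1 with hb
    set k : ℕ := ⌈b / ε⌉₊ + 1 with hk
    obtain ⟨m, I', f', h1, h2, h3, h4, h5⟩ := C.key hr k
    have hm : 0 < m := h5 (by omega)
    refine ⟨m, I', hm, h1, ?_⟩
    have hchi := CapWall.chiFF_ge_of_wall hm I' f' h2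
    have hbk : b < ε * k := by
      have h6 : b / ε ≤ (⌈b / ε⌉₊ : ℝ) := Nat.le_ceil _
      have h7 : ((⌈b / ε⌉₊ : ℕ) : ℝ) < (k : ℝ) := by
        rw [hk]
        push_cast
        linarith
      have h8 : b / ε < (k : ℝ) := lt_of_le_of_lt h6 h7
      calc b = (b / ε) * ε := by field_simp
      _ < (k : ℝ) * ε := mul_lt_mul_of_pos_right h8 hε
      _ = ε * k := mul_comm _ _
    rw [h3]
    calc (r - ε) * (k : ℝ) = r * k - ε * k := by ring
    _ < r * k - b := by linarith
    _ ≤ ((Finset.univ.image f').card : ℝ) := h4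
    _ ≤ (chiFF (intervalGraph I') : ℝ) := Nat.cast_le.mpr hchi
end

section
/- Let r > 4, let θ be real with 1 ≤ θ < r − 2, let δ > 0, and let N > 1 be an integer. If the sequence u satisfies u_0 = u_1 ≤ u_2 < u_3 < ⋯ < u_N, then u_{N+1} ≥ 0. -/
/-- The sequence `u₀ = u₁ = 1`, `u₂ = θ + δ`,
`uₙ = (r - θ)u_{n-1} - (r - 2θ)u_{n-2} - θu_{n-3}` for `n ≥ 3`. -/
def u (r θ δ : ℝ) : ℕ → ℝ
  | 0 => 1
  | 1 => 1
  | 2 => θ + δ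
  | (n + 3) => (r - θ) * u r θ δ (n + 2) - (r - 2 * θ) * u r θ δ (n + 1) - θ * u r θ δ n

/-- If `r > 4`, `1 ≤ θ < r - 2`, `δ > 0`, `N > 1`, and
`u₀ = u₁ ≤ u₂ < u₃ < ⋯ < u_N`, then `u_{N+1} ≥ 0`. -/
theorem u_succ_nonneg (r θ δ : ℝ) (hr : 4 < r) (hθ1 : 1 ≤ θ) (hθ2 : θ < r - 2)
    (hδ : 0 < δ) (N : ℕ) (hN : 1 < N)
    (h01 : u r θ δ 0 = u r θ δ 1)
    (h12 : u r θ δ 1 ≤ u r θ δ 2)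
    (hchain : ∀ m : ℕ, 2 ≤ m → m < N → u r θ δ m < u r θ δ (m + 1)) :
    0 ≤ u r θ δ (N + 1) := by
  obtain ⟨n, rfl⟩ : ∃ n, N = n + 2 := ⟨N - 2, by omega⟩
  have key : u r θ δ (n + 3) =
      (r - θ) * (u r θ δ (n + 2) - u r θ δ (n + 1)) +
      θ * (u r θ δ (n + 1) - u r θ δ n) := by
    show (r - θ) * u r θ δ (n + 2) - (r - 2 * θ) * u r θ δ (n + 1) - θ * u r θ δ n = _
    ring
  have h1 : u r θ δ (n + 1) ≤ u r θ δ (n + 2) := by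
    rcases Nat.eq_zero_or_pos n with rfl | hn
    · exact h12
    · exact le_of_lt (hchain (n + 1) (by omega) (by omega))
  have h2 : u r θ δ n ≤ u r θ δ (n + 1) := by
    match n, h1 with
    | 0, _ => exact le_of_eq h01
    | 1, _ => exact h12
    | (m + 2), _ => exact le_of_lt (hchain (m + 2) (by omega) (by omega))
  have : (0:ℝ) < r - θ := by linarith
  show 0 ≤ u r θ δ (n + 3)
  rw [key]
  have := mul_nonneg (le_of_lt this) (sub_nonneg.mpr h1)
  have := mul_nonneg (by linarith : (0:ℝ) ≤ θ) (sub_nonneg.mpr h2)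
  linarith
end

section
/- For every integer n ≥ 1, φ_n(r − θ) = r + u_3 + u_4 + ⋯ + u_{n+2}, i.e., (u_{n+1} − u_n)(r − θ) + r·u_n = r + Σ_{k=3}^{n+2} u_k, where φ_n(y) = (u_{n+1} − u_n)·y + r·u_n. -/
/-- The affine map `φₙ(y) = (u_{n+1} - uₙ)·y + r·uₙ`. -/
def phi (r θ δ : ℝ) (n : ℕ) (y : ℝ) : ℝ :=
  (u r θ δ (n + 1) - u r θ δ n) * y + r * u r θ δ n

/-- For every `n ≥ 1`, `φₙ(r - θ) = r + u₃ + u₄ + ⋯ + u_{n+2}`. -/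
theorem phi_imagetop (r θ δ : ℝ) (n : ℕ) (hn : 1 ≤ n) :
    phi r θ δ n (r - θ) = r + ∑ k ∈ Finset.Icc 3 (n + 2), u r θ δ k := by
  induction n, hn using Nat.le_induction with
  | base =>
    show phi r θ δ 1 (r - θ) = r + ∑ k ∈ Finset.Icc 3 3, u r θ δ k
    simp [phi, u, Finset.Icc_self]
    ring
  | succ n hn ih =>
    have h : n + 1 + 2 = (n + 2) + 1 := by ring
    rw [h, Finset.sum_Icc_succ_top (by omega)]
    have : phi r θ δ (n + 1) (r - θ) = phi r θ δ n (r - θ) + u r θ δ (n + 3) := by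
      simp only [phi, show n + 1 + 1 = n + 2 from rfl, show n + 2 + 1 = n + 3 from rfl,
        u]
      ring
    rw [this, ih]
    ring
end

section
/- Let r, θ, δ be real numbers and let α, β, γ be real numbers with α < −1 and 0 < γ < 0.56 < β < 1, such that q(x) = (1 − x/α)(1 − x/β)(1 − x/γ) for all x, where q(x) = 1 − (r − θ)x + (r − 2θ)x² + θx³. If θ + δ < 1/(1 − γ), then the differences u_{n+1} − u_n tend to −∞ as n → ∞. -/
/-- The cubic `q(x) = 1 - (r - θ)x + (r - 2θ)x² + θx³`. -/
def q (r θ x : ℝ) : ℝ :=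
  1 - (r - θ) * x + (r - 2 * θ) * x ^ 2 + θ * x ^ 3

set_option maxHeartbeats 1600000 in
/-- Suppose `q` factors as `(1 - x/α)(1 - x/β)(1 - x/γ)` with real roots
`α < -1` and `0 < γ < 0.56 < β < 1`.  If `θ + δ < 1/(1 - γ)`, then
`u_{n+1} - uₙ → -∞`. -/
theorem diff_tendsto_atBot (r θ δ α β γ : ℝ)
    (hα : α < -1) (hγ0 : 0 < γ) (hγ : γ < 0.56) (hβ0 : 0.56 < β) (hβ1 : β < 1)
    (hfact : ∀ x : ℝ, q r θ x = (1 - x / α) * (1 - x / β) * (1 - x / γ))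
    (hlt : θ + δ < 1 / (1 - γ)) :
    Filter.Tendsto (fun n => u r θ δ (n + 1) - u r θ δ n) Filter.atTop Filter.atBot := by
  have hα0 : α ≠ 0 := by nlinarith
  have hβpos : (0:ℝ) < β := by norm_num at hβ0 ⊢; linarith
  have hβ0' : β ≠ 0 := ne_of_gt hβpos
  have hγ0' : γ ≠ 0 := ne_of_gt hγ0
  set a := 1/α with ha
  set b := 1/β with hb
  set c := 1/γ with hc
  have haα : a * α = 1 := one_div_mul_cancel hα0
  have hbβ : b * β = 1 := one_div_mul_cancel hβ0'
  have hcγ : c * γ = 1 := one_div_mul_cancel hγ0'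
  have ha2 : a < 0 := by nlinarith
  have ha1 : -1 < a := by nlinarith
  have hb1 : 1 < b := by nlinarith
  have hb2 : b < 25/14 := by norm_num at hβ0; nlinarith
  have hc1 : (25:ℝ)/14 < c := by norm_num at hγ; nlinarith
  have hcb : b < c := by linarith
  have hc1' : (1:ℝ) < c := by linarith
  have hab : a < b := by linarith
  have hac : a < c := by linarith
  have hab' : a - b ≠ 0 := by linarith
  have hac' : a - c ≠ 0 := by linarith
  have hba' : b - a ≠ 0 := by linarith
  have hbc' : b - c ≠ 0 := by linarith
  have hca' : c - a ≠ 0 := by linarith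
  have hcb' : c - b ≠ 0 := by linarith
  -- coefficient identities
  have h1 : r - θ = a + b + c := by
    have e1 := hfact 1; have e2 := hfact (-1); have e3 := hfact 2
    simp only [q] at e1 e2 e3
    linear_combination -e1 + (1/3) * e2 + (1/6) * e3
  have h2 : r - 2*θ = a*b + a*c + b*c := by
    have e1 := hfact 1; have e2 := hfact (-1)
    simp only [q] at e1 e2
    linear_combination (1/2) * e1 + (1/2) * e2
  have h3 : θ = -(a*b*c) := by
    have e1 := hfact 1; have e2 := hfact (-1); have e3 := hfact 2
    simp only [q] at e1 e2 e3
    linear_combination (-1/2) * e1 - (1/6) * e2 + (1/6) * e3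
  have hq1 : (1 - a) * (1 - b) * (1 - c) = 1 := by
    have e1 := hfact 1; simp only [q] at e1
    linear_combination -e1
  -- characteristic equations
  have hqa : a^3 = (r - θ)*a^2 - (r - 2*θ)*a - θ := by rw [h1, h2, h3]; ring
  have hqb : b^3 = (r - θ)*b^2 - (r - 2*θ)*b - θ := by rw [h1, h2, h3]; ring
  have hqc : c^3 = (r - θ)*c^2 - (r - 2*θ)*c - θ := by rw [h1, h2, h3]; ring
  -- closed form coefficients
  set d := θ + δ - 1 with hd
  set A := ((1-b)*(1-c) + d)/((a-b)*(a-c)) with hA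
  set B := ((1-a)*(1-c) + d)/((b-a)*(b-c)) with hB
  set C := ((1-a)*(1-b) + d)/((c-a)*(c-b)) with hC
  have key3 : ∀ n, u r θ δ n = A*a^n + B*b^n + C*c^n
      ∧ u r θ δ (n+1) = A*a^(n+1) + B*b^(n+1) + C*c^(n+1)
      ∧ u r θ δ (n+2) = A*a^(n+2) + B*b^(n+2) + C*c^(n+2) := by
    intro n
    induction n with
    | zero =>
      refine ⟨?_, ?_, ?_⟩
      · show (1:ℝ) = _
        rw [hA, hB, hC]; field_simp; ring
      · show (1:ℝ) = _
        rw [hA, hB, hC]; field_simp; ring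
      · show θ + δ = _
        rw [hA, hB, hC]
        have : θ + δ = 1 + d := by rw [hd]; ring
        rw [this]; field_simp; ring
    | succ k ih =>
      refine ⟨ih.2.1, ih.2.2, ?_⟩
      have hu : u r θ δ (k+1+2) =
          (r - θ) * u r θ δ (k+2) - (r - 2*θ) * u r θ δ (k+1) - θ * u r θ δ k := by
        rfl
      rw [hu, ih.1, ih.2.1, ih.2.2]
      linear_combination (-(A*a^k))*hqa - (B*b^k)*hqb - (C*c^k)*hqc
  have key : ∀ n, u r θ δ n = A*a^n + B*b^n + C*c^n := fun n => (key3 n).1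
  -- C < 0
  have h1c : (1:ℝ) - c ≠ 0 := by linarith
  have hprod : (1-a)*(1-b) = 1/(1-c) := by
    rw [eq_div_iff h1c]; linear_combination hq1
  have hγne : (1:ℝ) - γ ≠ 0 := by norm_num at hγ; intro h; nlinarith
  have hc1ne : c - 1 ≠ 0 := by intro h; nlinarith
  have hγval : 1/(1-γ) = c/(c-1) := by
    rw [div_eq_div_iff hγne hc1ne]
    linear_combination hcγ
  have hzero : 1/(1-c) + c/(c-1) - 1 = 0 := by
    field_simp
    ring
  have hnum : (1-a)*(1-b) + d < 0 := by
    rw [hprod, hd]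
    have : θ + δ < c/(c-1) := by rw [← hγval]; exact hlt
    linarith
  have hCneg : C < 0 := by
    rw [hC]
    exact div_neg_of_neg_of_pos hnum (mul_pos (by linarith) (by linarith))
  -- limits
  have hdiff : ∀ n : ℕ, u r θ δ (n+1) - u r θ δ n
      = c^n * (C*(c-1) + B*(b-1)*(b/c)^n) + A*(a-1)*a^n := by
    intro n
    have hcn : (c:ℝ)^n ≠ 0 := pow_ne_zero _ (by positivity)
    have hbn : c^n * (b/c)^n = b^n := by
      rw [← mul_pow, mul_div_cancel₀ b (ne_of_gt (by positivity : (0:ℝ) < c))]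
    rw [key (n+1), key n]
    linear_combination (-(B*(b-1)))*hbn
  have hc0 : (0:ℝ) < c := by linarith
  have hbc1 : b/c < 1 := (div_lt_one hc0).mpr hcb
  have hbc0 : 0 ≤ b/c := le_of_lt (div_pos (by linarith) hc0)
  have hinner : Filter.Tendsto (fun n : ℕ => C*(c-1) + B*(b-1)*(b/c)^n)
      Filter.atTop (nhds (C*(c-1))) := by
    have h0 : Filter.Tendsto (fun n : ℕ => (b/c)^n) Filter.atTop (nhds 0) :=
      tendsto_pow_atTop_nhds_zero_of_lt_one hbc0 hbc1
    have := (h0.const_mul (B*(b-1))).const_add (C*(c-1))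
    simpa using this
  have hpart1 : Filter.Tendsto (fun n : ℕ => c^n * (C*(c-1) + B*(b-1)*(b/c)^n))
      Filter.atTop Filter.atBot := by
    refine Filter.Tendsto.atTop_mul_neg ?_ (tendsto_pow_atTop_atTop_of_one_lt hc1') hinner
    exact mul_neg_of_neg_of_pos hCneg (by linarith)
  have hpart2 : Filter.Tendsto (fun n : ℕ => A*(a-1)*a^n) Filter.atTop (nhds 0) := by
    have h0 : Filter.Tendsto (fun n : ℕ => a^n) Filter.atTop (nhds 0) := by
      apply tendsto_pow_atTop_nhds_zero_of_abs_lt_one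
      rw [abs_lt]; constructor <;> linarith
    have := h0.const_mul (A*(a-1))
    simpa using this
  have := hpart1.atBot_add hpart2
  exact this.congr fun n => (hdiff n).symm
end

section
/- Let r, θ, δ be real numbers. Let α be a real number with |α| > 1 and let γ be a complex number with nonzero imaginary part and |γ| < 1, such that q(x) = (1 − x/α)(1 − x/γ)(1 − x/γ̄) for all complex x, where γ̄ is the complex conjugate of γ and q(x) = 1 − (r − θ)x + (r − 2θ)x² + θx³. Then there exists an integer N > 0 such that u_N ≥ u_{N+1}; i.e., the sequence u is not strictly increasing from some point on. -/
open Finset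

lemma sq_re_eq (z : ℂ) : (2 * z.re)^2 = 2 * ‖z‖^2 + 2 * (z^2).re := by
  rw [Complex.sq_norm]
  simp [Complex.normSq_apply, pow_two, Complex.mul_re]
  ring

lemma osc (B ζ : ℂ) (hB : B ≠ 0) (hζ : ‖ζ‖ = 1) (hζim : ζ.im ≠ 0) (N : ℕ)
    (h : ∀ n, N ≤ n → -(‖B‖ / 4) ≤ 2 * (B * ζ ^ n).re) : False := by
  set β := ‖B‖ with hβdef
  have hβ : 0 < β := by simpa [hβdef] using (norm_pos_iff.mpr hB)
  have hζ1 : ζ ≠ 1 := by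
    intro hh; rw [hh] at hζim; simp at hζim
  have hζ2 : ζ^2 ≠ 1 := by
    intro hh
    have : (ζ - 1) * (ζ + 1) = 0 := by linear_combination hh
    rcases mul_eq_zero.mp this with h' | h'
    · exact hζ1 (by linear_combination h')
    · have : ζ = -1 := by linear_combination h'
      rw [this] at hζim; simp at hζim
  set x : ℕ → ℝ := fun n => 2 * (B * ζ ^ n).re with hx
  set K : ℝ := 2 * β with hK
  set M1 : ℝ := 4 * β / ‖ζ - 1‖ with hM1
  set M2 : ℝ := 4 * β^2 / ‖ζ^2 - 1‖ with hM2
  have habsz : ∀ n, ‖B * ζ ^ n‖ = β := by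
    intro n; simp [norm_mul, norm_pow, hζ, hβdef]
  have habs : ∀ n, |x n| ≤ K := by
    intro n
    calc |x n| = 2 * |(B * ζ ^ n).re| := by rw [hx]; simp [abs_mul]
    _ ≤ 2 * ‖B * ζ ^ n‖ := by
        have := Complex.abs_re_le_norm (B * ζ ^ n); linarith [abs_nonneg (B*ζ^n).re]
    _ = K := by rw [habsz n, hK]
  have hM1pos : 0 ≤ M1 := by
    rw [hM1]; positivity
  have hS1 : ∀ m, |∑ n ∈ range m, x n| ≤ M1 := by
    intro m
    have hsum : ∑ n ∈ range m, x n = 2 * (B * ((ζ^m - 1)/(ζ-1))).re := by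
      rw [← geom_sum_eq hζ1, Finset.mul_sum, Complex.re_sum, hx]
      simp only [Complex.mul_re]
      rw [Finset.mul_sum]
    rw [hsum]
    have h1 : ‖B * ((ζ^m - 1)/(ζ-1))‖ ≤ β * (2 / ‖ζ - 1‖) := by
      rw [norm_mul, norm_div]
      have : ‖ζ^m - 1‖ ≤ 2 := by
        calc ‖ζ^m - 1‖ ≤ ‖ζ^m‖ + ‖(1:ℂ)‖ := by
              apply norm_sub_le
        _ = 2 := by rw [norm_pow, hζ, one_pow, norm_one]; norm_num
      have hd : 0 ≤ ‖ζ - 1‖ := by positivity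
      gcongr
    calc |2 * (B * ((ζ^m - 1)/(ζ-1))).re| ≤ 2 * ‖B * ((ζ^m - 1)/(ζ-1))‖ := by
          rw [abs_mul]
          have := Complex.abs_re_le_norm (B * ((ζ^m - 1)/(ζ-1)))
          have := abs_nonneg (B * ((ζ^m - 1)/(ζ-1))).re
          simp only [abs_two]
          nlinarith
    _ ≤ 2 * (β * (2 / ‖ζ - 1‖)) := by linarith
    _ = M1 := by rw [hM1]; ring
  have hS2 : ∀ m, 2*β^2*m - M2 ≤ ∑ n ∈ range m, (x n)^2 := by
    intro m
    have hsq : ∀ n, (x n)^2 = 2*β^2 + 2*((B^2) * (ζ^2)^n).re := by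
      intro n
      have h1 := sq_re_eq (B * ζ ^ n)
      rw [hx]
      simp only []
      rw [h1, habsz n]
      congr 2
      ring
    have hsum2 : ∑ n ∈ range m, (x n)^2
        = 2*β^2*m + 2 * ((B^2) * (((ζ^2)^m - 1)/(ζ^2-1))).re := by
      rw [Finset.sum_congr rfl (fun n _ => hsq n), Finset.sum_add_distrib]
      rw [← geom_sum_eq hζ2, Finset.mul_sum, Complex.re_sum]
      simp only [Complex.mul_re, Finset.sum_const, Finset.card_range, nsmul_eq_mul]
      rw [Finset.mul_sum]
      ring
    rw [hsum2]
    have h1 : |2 * ((B^2) * (((ζ^2)^m - 1)/(ζ^2-1))).re| ≤ M2 := by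
      have hb2 : ‖B^2‖ = β^2 := by simp [norm_pow, hβdef]
      have h2 : ‖(ζ^2)^m - 1‖ ≤ 2 := by
        calc ‖(ζ^2)^m - 1‖ ≤ ‖(ζ^2)^m‖ + ‖(1:ℂ)‖ :=
              norm_sub_le _ _
        _ = 2 := by rw [norm_pow, norm_pow, hζ, one_pow, one_pow, norm_one]; norm_num
      have h3 : ‖(B^2) * (((ζ^2)^m - 1)/(ζ^2-1))‖ ≤ β^2 * (2 / ‖ζ^2 - 1‖) := by
        rw [norm_mul, norm_div, hb2]
        gcongr
      have h4 := Complex.abs_re_le_norm ((B^2) * (((ζ^2)^m - 1)/(ζ^2-1)))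
      have h5 := abs_nonneg ((B^2) * (((ζ^2)^m - 1)/(ζ^2-1))).re
      have heq : 2 * (β^2 * (2 / ‖ζ^2-1‖)) = M2 := by rw [hM2]; ring
      rw [abs_mul, abs_two]
      linarith
    have := neg_abs_le (2 * ((B^2) * (((ζ^2)^m - 1)/(ζ^2-1))).re)
    linarith [abs_le.mp h1]
  -- main chain
  have key : ∀ m, N ≤ m → β^2 * m ≤ M2 + K^2*N + 2*K*M1 := by
    intro m hm
    have hIco : ∑ n ∈ Finset.Ico N m, (x n)^2 ≤ 2*K*M1 + β^2 * (m - N) := by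
      have hpt : ∀ n ∈ Finset.Ico N m, (x n)^2 ≤ K * x n + K * (2 * (β/4)) := by
        intro n hn
        have hn' : N ≤ n := (Finset.mem_Ico.mp hn).1
        have hlb := h n hn'
        have hxabs : |x n| ≤ x n + 2*(β/4) := by
          rw [abs_le]
          have hlb' : -(β/4) ≤ x n := hlb
          constructor
          · linarith
          · linarith
        calc (x n)^2 = |x n| * |x n| := by rw [← abs_mul, abs_mul_self]; ring
        _ ≤ K * |x n| := by nlinarith [habs n, abs_nonneg (x n), hβ]
        _ ≤ K * (x n + 2*(β/4)) := by
            have hK0 : 0 ≤ K := by rw [hK]; linarith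
            nlinarith
        _ = K * x n + K * (2 * (β/4)) := by ring
      calc ∑ n ∈ Finset.Ico N m, (x n)^2 ≤ ∑ n ∈ Finset.Ico N m, (K * x n + K * (2 * (β/4))) :=
            Finset.sum_le_sum hpt
      _ = K * (∑ n ∈ Finset.Ico N m, x n) + (m - N) * (K * (2*(β/4))) := by
          rw [Finset.sum_add_distrib, ← Finset.mul_sum, Finset.sum_const, Nat.card_Ico]
          rw [nsmul_eq_mul]
          push_cast [hm]
          ring
      _ ≤ K * (∑ n ∈ Finset.Ico N m, x n) + (m - N) * (β^2) := by
          have : K * (2*(β/4)) = β^2 := by rw [hK]; ring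
          rw [this]
      _ ≤ 2*K*M1 + β^2 * (m - N) := by
          have hsub : ∑ n ∈ Finset.Ico N m, x n = (∑ n ∈ range m, x n) - ∑ n ∈ range N, x n := by
            rw [Finset.sum_Ico_eq_sub _ hm]
          have hb1 := hS1 m
          have hb2 := hS1 N
          have hK0 : 0 ≤ K := by rw [hK]; linarith
          have : ∑ n ∈ Finset.Ico N m, x n ≤ 2 * M1 := by
            rw [hsub]
            have := abs_le.mp hb1
            have := abs_le.mp hb2
            linarith
          nlinarith
    have hIco2 : (2*β^2*m - M2) - K^2 * N ≤ ∑ n ∈ Finset.Ico N m, (x n)^2 := by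
      have hsub : ∑ n ∈ Finset.Ico N m, (x n)^2 = (∑ n ∈ range m, (x n)^2) - ∑ n ∈ range N, (x n)^2 := by
        rw [Finset.sum_Ico_eq_sub _ hm]
      have hlow := hS2 m
      have hup : ∑ n ∈ range N, (x n)^2 ≤ K^2 * N := by
        calc ∑ n ∈ range N, (x n)^2 ≤ ∑ n ∈ range N, K^2 := by
              apply Finset.sum_le_sum
              intro n _
              calc (x n)^2 = |x n|^2 := (sq_abs _).symm
              _ ≤ K^2 := pow_le_pow_left₀ (abs_nonneg _) (habs n) 2
        _ = K^2 * N := by rw [Finset.sum_const, Finset.card_range, nsmul_eq_mul]; ring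
      rw [hsub]; linarith
    have hmN : (N:ℝ) ≤ m := by exact_mod_cast hm
    nlinarith
  obtain ⟨m0, hm0⟩ := exists_nat_gt ((M2 + K^2*N + 2*K*M1)/β^2)
  have hm := key (max m0 N) (le_max_right _ _)
  have hmax : (m0:ℝ) ≤ (max m0 N : ℕ) := by exact_mod_cast le_max_left m0 N
  have : (M2 + K^2*N + 2*K*M1)/β^2 < (max m0 N : ℕ) := lt_of_lt_of_le hm0 hmax
  have hβ2 : (0:ℝ) < β^2 := by positivity
  have := (div_lt_iff₀ hβ2).mp this
  linarith





/-- The cubic `q` over `ℂ`: `q(x) = 1 - (r - θ)x + (r - 2θ)x² + θx³`. -/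
def qC (r θ : ℝ) (x : ℂ) : ℂ :=
  1 - ((r : ℂ) - (θ : ℂ)) * x + ((r : ℂ) - 2 * (θ : ℂ)) * x ^ 2 + (θ : ℂ) * x ^ 3

lemma u_zero (r θ δ : ℝ) : u r θ δ 0 = 1 := rfl
lemma u_one (r θ δ : ℝ) : u r θ δ 1 = 1 := rfl
lemma u_two (r θ δ : ℝ) : u r θ δ 2 = θ + δ := rfl
lemma u_rec (r θ δ : ℝ) (n : ℕ) :
    u r θ δ (n + 3) = (r - θ) * u r θ δ (n + 2) - (r - 2 * θ) * u r θ δ (n + 1) - θ * u r θ δ n := by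
  rw [u]


set_option maxHeartbeats 2000000 in
/-- If `q` factors as `(1 - x/α)(1 - x/γ)(1 - x/γ̄)` with `α` real, `|α| > 1`,
and `γ` a non-real complex number with `|γ| < 1`, then the sequence `u` is not
eventually strictly increasing: there is `N > 0` with `u_N ≥ u_{N+1}`. -/
theorem complex_case (r θ δ : ℝ) (α : ℝ) (γ : ℂ)
    (hα : 1 < |α|) (hγim : γ.im ≠ 0) (hγabs : ‖γ‖ < 1)
    (hfact : ∀ x : ℂ,
      qC r θ x = (1 - x / (α : ℂ)) * (1 - x / γ) * (1 - x / (starRingEnd ℂ γ))) :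
    ∃ N : ℕ, 0 < N ∧ u r θ δ (N + 1) ≤ u r θ δ N := by
  have hα0' : α ≠ 0 := by intro hh; rw [hh, abs_zero] at hα; norm_num at hα
  have hα0 : (α : ℂ) ≠ 0 := by exact_mod_cast hα0'
  have hγ0 : γ ≠ 0 := by
    intro hh; rw [hh] at hγim; simp at hγim
  have hγ0' : starRingEnd ℂ γ ≠ 0 := by simpa using hγ0
  set a : ℂ := ((α⁻¹ : ℝ) : ℂ) with ha_def
  set b : ℂ := γ⁻¹ with hb_def
  set c : ℂ := (starRingEnd ℂ γ)⁻¹ with hc_def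
  have hca : a = (α : ℂ)⁻¹ := by rw [ha_def]; push_cast; ring
  have hcb : c = starRingEnd ℂ b := by rw [hc_def, hb_def, map_inv₀]
  -- root relations
  have hroot : ∀ t : ℂ, t ≠ 0 → qC r θ t = 0 →
      t⁻¹^3 = ((r:ℂ) - θ) * t⁻¹^2 - ((r:ℂ) - 2*θ) * t⁻¹ - θ := by
    intro t ht hq
    rw [qC] at hq
    have hs : t * t⁻¹ = 1 := mul_inv_cancel₀ ht
    linear_combination t⁻¹^3 * hq + (((r:ℂ) - θ) * t⁻¹^2 - ((r:ℂ) - 2*θ) * t⁻¹ * (t * t⁻¹ + 1) - θ * ((t * t⁻¹)^2 + t * t⁻¹ + 1)) * hs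
  have hqa : qC r θ (α : ℂ) = 0 := by
    rw [hfact]; rw [div_self hα0]; ring
  have hqb : qC r θ γ = 0 := by
    rw [hfact]; rw [div_self hγ0]; ring
  have hqc : qC r θ (starRingEnd ℂ γ) = 0 := by
    rw [hfact]; rw [div_self hγ0']; ring
  have hra : a^3 = ((r:ℂ) - θ) * a^2 - ((r:ℂ) - 2*θ) * a - θ := by
    rw [hca]; exact hroot _ hα0 hqa
  have hrb : b^3 = ((r:ℂ) - θ) * b^2 - ((r:ℂ) - 2*θ) * b - θ := by
    rw [hb_def]; exact hroot _ hγ0 hqb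
  have hrc : c^3 = ((r:ℂ) - θ) * c^2 - ((r:ℂ) - 2*θ) * c - θ := by
    rw [hc_def]; exact hroot _ hγ0' hqc
  -- properties of a, b, c
  have hbim : b.im ≠ 0 := by
    rw [hb_def, Complex.inv_im]
    have hns : Complex.normSq γ ≠ 0 := by simpa using hγ0
    intro hh
    rcases div_eq_zero_iff.mp hh with h' | h'
    · exact hγim (by linarith [neg_eq_zero.mp h'])
    · exact hns h'
  have haim : a.im = 0 := by rw [ha_def]; simp
  have hcim : c.im = -b.im := by rw [hcb]; simp
  have habs_a : ‖a‖ < 1 := by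
    rw [hca, norm_inv, Complex.norm_real, Real.norm_eq_abs]
    rw [inv_lt_one_iff₀]; right; exact hα
  have habs_b : 1 < ‖b‖ := by
    rw [hb_def, norm_inv]
    rw [one_lt_inv_iff₀]
    exact ⟨norm_pos_iff.mpr hγ0, hγabs⟩
  have hab : a ≠ b := fun h => hbim (h ▸ haim)
  have hac : a ≠ c := fun h => hbim (by have := h ▸ haim; rw [hcim] at this; linarith)
  have hbc : b ≠ c := by
    intro h
    rw [hcb] at h
    exact hbim ((Complex.conj_eq_iff_im.mp h.symm))
  have hab' : a - b ≠ 0 := sub_ne_zero.mpr hab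
  have hac' : a - c ≠ 0 := sub_ne_zero.mpr hac
  have hbc' : b - c ≠ 0 := sub_ne_zero.mpr hbc
  have hba' : b - a ≠ 0 := sub_ne_zero.mpr hab.symm
  have hca' : c - a ≠ 0 := sub_ne_zero.mpr hac.symm
  have hcb' : c - b ≠ 0 := sub_ne_zero.mpr hbc.symm
  set v : ℂ := ((θ + δ : ℝ) : ℂ) with hv_def
  set A : ℂ := (v - (b+c) + b*c)/((a-b)*(a-c)) with hA_def
  set Bq : ℂ := (v - (a+c) + a*c)/((b-a)*(b-c)) with hB_def
  set Cq : ℂ := (v - (a+b) + a*b)/((c-a)*(c-b)) with hC_def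
  have hconj_a : starRingEnd ℂ a = a := by rw [ha_def]; exact Complex.conj_ofReal _
  have hconj_b : starRingEnd ℂ b = c := by rw [hcb]
  have hconj_c : starRingEnd ℂ c = b := by rw [hcb, Complex.conj_conj]
  have hconj_v : starRingEnd ℂ v = v := by rw [hv_def]; exact Complex.conj_ofReal _
  clear_value a b c v A Bq Cq
  have h0 : A + Bq + Cq = 1 := by
    rw [hA_def, hB_def, hC_def]; field_simp; ring
  have h1 : A*a + Bq*b + Cq*c = 1 := by
    rw [hA_def, hB_def, hC_def]; field_simp; ring
  have h2 : A*a^2 + Bq*b^2 + Cq*c^2 = v := by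
    rw [hA_def, hB_def, hC_def]; field_simp; ring
  have hconjA : starRingEnd ℂ A = A := by
    rw [hA_def, map_div₀, map_add, map_sub, map_add, map_mul, map_mul, map_sub, map_sub,
      hconj_a, hconj_b, hconj_c, hconj_v]
    try ring
  have hconjB : starRingEnd ℂ Bq = Cq := by
    rw [hB_def, hC_def, map_div₀, map_add, map_sub, map_add, map_mul, map_mul, map_sub, map_sub,
      hconj_a, hconj_b, hconj_c, hconj_v]
    try ring
  -- closed form
  have key : ∀ n : ℕ, (u r θ δ n : ℂ) = A * a^n + Bq * b^n + Cq * c^n := by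
    intro n
    induction n using Nat.strong_induction_on with
    | _ n ih =>
      match n with
      | 0 =>
        rw [u_zero]
        simp only [pow_zero, mul_one, Complex.ofReal_one]
        exact h0.symm
      | 1 =>
        rw [u_one]
        simp only [pow_one, Complex.ofReal_one]
        exact h1.symm
      | 2 =>
        rw [u_two, ← hv_def]
        exact h2.symm
      | (m+3) =>
        rw [u_rec]
        push_cast
        rw [ih (m+2) (by omega), ih (m+1) (by omega), ih m (by omega)]
        have ea : a^(m+3) = a^m * a^3 := by ring
        have eb : b^(m+3) = b^m * b^3 := by ring
        have ec : c^(m+3) = c^m * c^3 := by ring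
        rw [ea, eb, ec, hra, hrb, hrc]
        ring
  have hAim : A.im = 0 := Complex.conj_eq_iff_im.mp hconjA
  have hu : ∀ n : ℕ, u r θ δ n = A.re * (α⁻¹)^n + 2 * (Bq * b^n).re := by
    intro n
    have hk := congrArg Complex.re (key n)
    rw [Complex.ofReal_re] at hk
    have hcc : Cq * c^n = starRingEnd ℂ (Bq * b^n) := by
      rw [map_mul, map_pow, hconjB, hconj_b]
    rw [hcc] at hk
    have han : a ^ n = (((α⁻¹)^n : ℝ) : ℂ) := by rw [ha_def]; push_cast; ring
    rw [han] at hk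
    simp only [Complex.add_re, Complex.mul_re, Complex.ofReal_re, Complex.ofReal_im,
      Complex.conj_re, hAim] at hk
    rw [hk, Complex.mul_re]; ring
  -- endgame
  by_contra hcon
  push_neg at hcon
  have hmono : ∀ n : ℕ, 1 ≤ n → 1 ≤ u r θ δ n := by
    intro n hn
    induction n, hn using Nat.le_induction with
    | base => rw [u_one]
    | succ n hn ih => exact ih.trans (hcon n (by omega)).le
  have habs_inv : |α⁻¹| < 1 := by
    rw [abs_inv]
    rw [inv_lt_one_iff₀]; right; exact hα
  by_cases hBq : Bq = 0
  · -- u n = A.re * (α⁻¹)^n → 0, contradiction with u n ≥ 1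
    have hu' : ∀ n : ℕ, u r θ δ n = A.re * (α⁻¹)^n := by
      intro n; rw [hu n, hBq]; simp
    have htend : Filter.Tendsto (fun n : ℕ => A.re * (α⁻¹)^n) Filter.atTop (nhds 0) := by
      have := tendsto_pow_atTop_nhds_zero_of_abs_lt_one habs_inv
      simpa using this.const_mul A.re
    have hev := htend.eventually_lt_const (by norm_num : (0:ℝ) < 1)
    obtain ⟨n, hn1, hn2⟩ := ((hev.and (Filter.eventually_ge_atTop 1)).exists)
    have := hmono n hn2
    rw [hu' n] at this
    linarith
  · -- oscillation case
    set R : ℝ := ‖b‖ with hR_def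
    have hR1 : 1 < R := habs_b
    have hR0 : 0 < R := by linarith
    set ζ : ℂ := ((R⁻¹ : ℝ) : ℂ) * b with hζ_def
    have hζabs : ‖ζ‖ = 1 := by
      rw [hζ_def, norm_mul, Complex.norm_real, Real.norm_eq_abs, abs_inv, abs_of_pos hR0, ← hR_def]
      field_simp
    have hζim : ζ.im ≠ 0 := by
      have him : ζ.im = R⁻¹ * b.im := by rw [hζ_def]; simp [Complex.mul_im]
      rw [him]
      exact mul_ne_zero (by positivity) hbim
    have hbn : ∀ n : ℕ, (Bq * b^n).re = R^n * (Bq * ζ^n).re := by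
      intro n
      have : Bq * b^n = ((R^n : ℝ) : ℂ) * (Bq * ζ^n) := by
        rw [hζ_def]
        rw [mul_pow, ← Complex.ofReal_pow]
        push_cast
        have hRne : (R : ℂ) ≠ 0 := by exact_mod_cast hR0.ne'
        field_simp
        rw [one_div, inv_pow, mul_assoc, mul_inv_cancel₀ (pow_ne_zero n hRne), mul_one]
      rw [this]
      simp [Complex.mul_re, ← Complex.ofReal_pow]
    set β : ℝ := ‖Bq‖ with hβ_def
    have hβ0 : 0 < β := by
      rw [hβ_def]; exact norm_pos_iff.mpr hBq
    set C : ℝ := |A.re| + 1 with hC_def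
    have hxlb : ∀ n : ℕ, 1 ≤ n → -(C * (R⁻¹)^n) ≤ 2 * (Bq * ζ^n).re := by
      intro n hn
      have h1n := hmono n hn
      rw [hu n, hbn n] at h1n
      have hA1 : A.re * (α⁻¹)^n ≤ |A.re| := by
        calc A.re * (α⁻¹)^n ≤ |A.re * (α⁻¹)^n| := le_abs_self _
        _ = |A.re| * |α⁻¹|^n := by rw [abs_mul, abs_pow]
        _ ≤ |A.re| * 1 := by
            have := pow_le_one₀ (abs_nonneg (α⁻¹)) habs_inv.le (n := n)
            nlinarith [abs_nonneg A.re]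
        _ = |A.re| := mul_one _
      have h2 : -C ≤ R^n * (2 * (Bq * ζ^n).re) := by
        rw [hC_def]; nlinarith
      have hRn : (0:ℝ) < R^n := pow_pos hR0 n
      have heq : -(C * (R⁻¹)^n) = -C / R^n := by
        rw [inv_pow]; field_simp
      rw [heq, div_le_iff₀ hRn]
      nlinarith
    have hRinv : |R⁻¹| < 1 := by
      rw [abs_inv, abs_of_pos hR0]
      rw [inv_lt_one_iff₀]; right; exact hR1
    have htend : Filter.Tendsto (fun n : ℕ => C * (R⁻¹)^n) Filter.atTop (nhds 0) := by
      have := tendsto_pow_atTop_nhds_zero_of_abs_lt_one hRinv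
      simpa using this.const_mul C
    have hev := htend.eventually_lt_const (by positivity : (0:ℝ) < β/4)
    rw [Filter.eventually_atTop] at hev
    obtain ⟨N₀, hN₀⟩ := hev
    exact osc Bq ζ hBq hζabs hζim (max N₀ 1)
      (fun n hn => by
        have h1 := hxlb n (le_trans (le_max_right N₀ 1) hn)
        have h2 := hN₀ n (le_trans (le_max_left N₀ 1) hn)
        rw [← hβ_def]
        linarith)
end
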